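/- arXiv:2103.01186 — 3 statements merged into one kernel-verified Lean document; each statement's English description precedes it below -/
import Mathlib

section
/- Let k ∈ ℕ and let X = (X₁,…,X_k) and X′ = (X′₁,…,X′_k) be ℝ^k-valued random vectors, possibly defined on different probability spaces. Suppose that for every (z₁,…,z_k) ∈ ℕ^k (positive integers) one has E[∏_{i=1}^k exp(−z_i·exp(X_i))] = E[∏_{i=1}^k exp(−z_i·exp(X′_i))]. Then X and X′ have the same distribution on ℝ^k. -/
open MeasureTheory Filter Set Topology ProbabilityTheory
open scoped ENNReal NNReal

attribute [local instance] MeasureTheory.Measure.Subtype.measureSpace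

noncomputable section

namespace LineEnsembles

/-- Borel measurable space structure on spaces of continuous maps. -/
instance (priority := 100) instMeasCM {X : Type} [TopologicalSpace X] :
    MeasurableSpace C(X, ℝ) := borel _

/-- The Gaussian heat kernel `p(t; x, y) = exp(-(x-y)²/(2t))/√(2πt)`. -/
def heatK (t x y : ℝ) : ℝ :=
  Real.exp (-((y - x) ^ 2) / (2 * t)) / Real.sqrt (2 * Real.pi * t)

/-- The density (with respect to Lebesgue measure on `ℝ^{m+1}`) of the finite-dimensional
distribution of the Brownian bridge from `(a,x)` to `(b,y)` at times `t 0 < ... < t m`. -/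
def bridgeDensity (a b x y : ℝ) {m : ℕ} (t : Fin (m + 1) → ℝ) (z : Fin (m + 1) → ℝ) : ℝ :=
  (heatK (t 0 - a) x (z 0) *
      (∏ i : Fin m, heatK (t i.succ - t i.castSucc) (z i.castSucc) (z i.succ)) *
      heatK (b - t (Fin.last m)) (z (Fin.last m)) y) / heatK (b - a) x y

/-- `μ` is the law, on `C([a,b],ℝ)`, of the Brownian bridge from `x` at time `a` to `y` at
time `b` with diffusion parameter 1: it is a probability measure whose finite-dimensional
distributions at interior times have the prescribed Gaussian densities. -/
def IsBrownianBridge (a b x y : ℝ) (μ : Measure C(↥(Icc a b), ℝ)) : Prop :=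
  IsProbabilityMeasure μ ∧
    ∀ (m : ℕ) (t : Fin (m + 1) → ℝ) (ht : ∀ i, t i ∈ Ioo a b), StrictMono t →
      Measure.map (fun ϕ : C(↥(Icc a b), ℝ) => fun i => ϕ ⟨t i, Ioo_subset_Icc_self (ht i)⟩) μ =
        MeasureTheory.volume.withDensity fun z => ENNReal.ofReal (bridgeDensity a b x y t z)

/-- `μ` is the law of `k` independent Brownian bridges on `[a,b]`, the `i`-th going from
`x i` at time `a` to `y i` at time `b`. -/
def IsFreeBridgeEnsemble (a b : ℝ) (k : ℕ) (x y : Fin k → ℝ)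
    (μ : Measure (Fin k → C(↥(Icc a b), ℝ))) : Prop :=
  IsProbabilityMeasure μ ∧
    iIndepFun
      (fun (i : Fin k) (Q : Fin k → C(↥(Icc a b), ℝ)) => Q i) μ ∧
    ∀ i, IsBrownianBridge a b (x i) (y i) (Measure.map (fun Q => Q i) μ)

/-- The curves of a `k`-curve ensemble, extended by the boundary data `f` (above, index `-1`)
and `g` (below, index `k`). -/
def curveE {a b : ℝ} (k : ℕ) (f g : ↥(Icc a b) → EReal)
    (Q : Fin k → C(↥(Icc a b), ℝ)) (j : ℤ) : ↥(Icc a b) → EReal :=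
  if h0 : j < 0 then f
  else if h : j < (k : ℤ) then fun u => ((Q ⟨j.toNat, by omega⟩ u : ℝ) : EReal)
  else g

/-- The Boltzmann weight `W_H` of an ensemble of `k` curves on `[a,b]` with boundary data
`(f,g)`. -/
def boltzmannWeight (H : EReal → ℝ) (a b : ℝ) (k : ℕ) (f g : ↥(Icc a b) → EReal)
    (Q : Fin k → C(↥(Icc a b), ℝ)) : ℝ :=
  Real.exp (-(∑ j ∈ Finset.range (k + 1),
    ∫ u : ↥(Icc a b), H (curveE k f g Q (j : ℤ) u - curveE k f g Q ((j : ℤ) - 1) u)))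

/-- `ν` is the `⟦1,k⟧ × (a,b)`-indexed `H`-Brownian bridge line ensemble with entrance data
`x`, exit data `y` and boundary data `(f,g)`:  the probability measure whose Radon-Nikodym
derivative with respect to the law of `k` independent Brownian bridges is proportional to the
Boltzmann weight. -/
def IsHBridgeEnsemble (H : EReal → ℝ) (a b : ℝ) (k : ℕ) (x y : Fin k → ℝ)
    (f g : ↥(Icc a b) → EReal) (ν : Measure (Fin k → C(↥(Icc a b), ℝ))) : Prop :=
  ∃ μ : Measure (Fin k → C(↥(Icc a b), ℝ)), IsFreeBridgeEnsemble a b k x y μ ∧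
    ν = (∫⁻ Q, ENNReal.ofReal (boltzmannWeight H a b k f g Q) ∂μ)⁻¹ •
        μ.withDensity fun Q => ENNReal.ofReal (boltzmannWeight H a b k f g Q)

/-- A Hamiltonian: a continuous function `H : [-∞, ∞) → [0, ∞)`, encoded as a function on
`EReal` whose values and continuity are only required away from `+∞`. -/
def IsHamiltonian (H : EReal → ℝ) : Prop :=
  ContinuousOn H {x : EReal | x ≠ ⊤} ∧ ∀ x : EReal, x ≠ ⊤ → 0 ≤ H x

/-- A `λ`-exponential Hamiltonian: continuous, convex, and
`limsup_{y→∞} sup_{x ∈ [-M,M]} |H(x+y)/H(y) - e^{λx}| = 0` for every `M ∈ ℕ`. -/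
def IsLambdaExpHamiltonian (l : ℝ) (H : EReal → ℝ) : Prop :=
  IsHamiltonian H ∧
    ConvexOn ℝ Set.univ (fun x : ℝ => H (x : EReal)) ∧
    ∀ M : ℕ, Tendsto
      (fun y : ℝ => ⨆ x ∈ Icc (-(M : ℝ)) (M : ℝ), |H ((x + y : ℝ) : EReal) / H ((y : ℝ) : EReal) - Real.exp (l * x)|)
      atTop (𝓝 0)


end LineEnsembles

open LineEnsembles

namespace ExpExpAux

variable {k : ℕ}

abbrev KK (k : ℕ) : Type := Fin k → ↥(Set.Icc (0:ℝ) 1)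

def mono (k : ℕ) (n : Fin k → ℕ) : C(KK k, ℝ) :=
  ⟨fun x => ∏ i, (x i : ℝ) ^ (n i),
   continuous_finset_prod _ fun i _ =>
     ((continuous_subtype_val.comp (continuous_apply i)).pow _)⟩

lemma mono_apply (n : Fin k → ℕ) (x : KK k) : mono k n x = ∏ i, (x i : ℝ) ^ (n i) := rfl

lemma mono_mul (n m : Fin k → ℕ) : mono k n * mono k m = mono k (n + m) := by
  ext x
  simp [mono, ← Finset.prod_mul_distrib, pow_add]

lemma mono_zero : mono k 0 = 1 := by
  ext x; simp [mono]

def Msub (k : ℕ) : Subalgebra ℝ C(KK k, ℝ) :=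
  (Submodule.span ℝ (Set.range (mono k))).toSubalgebra
    (by rw [← mono_zero]; exact Submodule.subset_span ⟨0, rfl⟩)
    (fun f g hf hg => by
      have hss : Submodule.span ℝ (Set.range (mono k)) * Submodule.span ℝ (Set.range (mono k)) ≤
          Submodule.span ℝ (Set.range (mono k)) := by
        rw [Submodule.span_mul_span]
        apply Submodule.span_le.2
        rintro _ ⟨_, ⟨n, rfl⟩, _, ⟨m, rfl⟩, rfl⟩
        exact Submodule.subset_span ⟨n + m, (mono_mul n m).symm⟩
      exact hss (Submodule.mul_mem_mul hf hg))

lemma Msub_separates : (Msub k).SeparatesPoints := by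
  intro x y hxy
  have hex : ∃ i, x i ≠ y i := by
    by_contra hc; push_neg at hc; exact hxy (funext hc)
  obtain ⟨i, hi⟩ := hex
  refine ⟨_, ⟨mono k (Pi.single i 1), Submodule.subset_span ⟨_, rfl⟩, rfl⟩, ?_⟩
  have hval : ∀ t : KK k, mono k (Pi.single i 1) t = (t i : ℝ) := by
    intro t
    rw [mono_apply]
    rw [Finset.prod_eq_single i (fun j _ hj => by simp [Pi.single_eq_of_ne hj]) (by simp)]
    simp
  simp only []
  show mono k (Pi.single i 1) x ≠ mono k (Pi.single i 1) y
  rw [hval, hval]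
  exact fun hcc => hi (Subtype.coe_injective hcc)


lemma integrable_cm (ρ : Measure (KK k)) [IsFiniteMeasure ρ] (g : C(KK k, ℝ)) :
    Integrable (fun x => g x) ρ := by
  exact (BoundedContinuousFunction.mkOfCompact g).integrable ρ

lemma cont_integral (ρ : Measure (KK k)) [IsFiniteMeasure ρ] :
    Continuous fun g : C(KK k, ℝ) => ∫ x, g x ∂ρ := by
  refine (LipschitzWith.of_dist_le_mul (K := (ρ univ).toNNReal) ?_).continuous
  intro f g
  have h1 : ∫ x, f x ∂ρ - ∫ x, g x ∂ρ = ∫ x, (f x - g x) ∂ρ :=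
    (integral_sub (integrable_cm ρ f) (integrable_cm ρ g)).symm
  rw [dist_eq_norm, h1, dist_eq_norm]
  calc ‖∫ x, (f x - g x) ∂ρ‖ ≤ ‖f - g‖ * (ρ univ).toReal := by
        refine norm_integral_le_of_norm_le_const (μ := ρ) (ae_of_all _ fun x => ?_)
        simpa using ContinuousMap.norm_coe_le_norm (f - g) x
    _ = ((ρ univ).toNNReal : ℝ) * ‖f - g‖ := by
        rw [mul_comm]; rfl

lemma integral_cm_eq (ρ₁ ρ₂ : Measure (KK k)) [IsFiniteMeasure ρ₁] [IsFiniteMeasure ρ₂]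
    (h : ∀ n : Fin k → ℕ,
      ∫ x, (∏ i, (x i : ℝ) ^ (n i)) ∂ρ₁ = ∫ x, (∏ i, (x i : ℝ) ^ (n i)) ∂ρ₂)
    (f : C(KK k, ℝ)) : ∫ x, f x ∂ρ₁ = ∫ x, f x ∂ρ₂ := by
  set S : Set C(KK k, ℝ) := {g | ∫ x, g x ∂ρ₁ = ∫ x, g x ∂ρ₂} with hS
  have hclosed : IsClosed S := by
    have : S = (fun g : C(KK k, ℝ) => ∫ x, g x ∂ρ₁ - ∫ x, g x ∂ρ₂) ⁻¹' {0} := by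
      ext g; simp [hS, sub_eq_zero]
    rw [this]
    exact IsClosed.preimage ((cont_integral ρ₁).sub (cont_integral ρ₂)) isClosed_singleton
  have hMS : (Msub k : Set C(KK k, ℝ)) ⊆ S := by
    intro g hg
    have hg' : g ∈ Submodule.span ℝ (Set.range (mono k)) := hg
    refine Submodule.span_induction ?_ ?_ ?_ ?_ hg'
    · rintro _ ⟨n, rfl⟩
      show ∫ x, mono k n x ∂ρ₁ = ∫ x, mono k n x ∂ρ₂
      simpa only [mono_apply] using h n
    · show ∫ x, (0 : C(KK k, ℝ)) x ∂ρ₁ = ∫ x, (0 : C(KK k, ℝ)) x ∂ρ₂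
      simp
    · intro a b _ _ ha hb
      show ∫ x, (a + b) x ∂ρ₁ = ∫ x, (a + b) x ∂ρ₂
      simp only [ContinuousMap.add_apply]
      rw [integral_add (integrable_cm ρ₁ a) (integrable_cm ρ₁ b),
        integral_add (integrable_cm ρ₂ a) (integrable_cm ρ₂ b), ha, hb]
    · intro c a _ ha
      show ∫ x, (c • a) x ∂ρ₁ = ∫ x, (c • a) x ∂ρ₂
      simp only [ContinuousMap.smul_apply]
      rw [integral_smul, integral_smul, ha]
  have hfc : f ∈ closure (Msub k : Set C(KK k, ℝ)) :=
    ContinuousMap.continuousMap_mem_subalgebra_closure_of_separatesPoints (Msub k)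
      Msub_separates f
  exact closure_minimal hMS hclosed hfc

lemma measure_ext_of_moments (ρ₁ ρ₂ : Measure (KK k)) [IsFiniteMeasure ρ₁] [IsFiniteMeasure ρ₂]
    (h : ∀ n : Fin k → ℕ,
      ∫ x, (∏ i, (x i : ℝ) ^ (n i)) ∂ρ₁ = ∫ x, (∏ i, (x i : ℝ) ^ (n i)) ∂ρ₂) :
    ρ₁ = ρ₂ := by
  refine ext_of_forall_lintegral_eq_of_IsFiniteMeasure fun f => ?_
  have hfc : Continuous fun x : KK k => ((f x : ℝ)) := NNReal.continuous_coe.comp f.continuous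
  have key := integral_cm_eq ρ₁ ρ₂ h ⟨fun x => (f x : ℝ), hfc⟩
  rw [lintegral_coe_eq_integral (fun x => f x) (by simpa using integrable_cm ρ₁ ⟨_, hfc⟩),
    lintegral_coe_eq_integral (fun x => f x) (by simpa using integrable_cm ρ₂ ⟨_, hfc⟩)]
  exact congrArg ENNReal.ofReal key

end ExpExpAux

open ExpExpAux

/-- STATEMENT 14 -/
theorem random_vectors_eq_of_expExp_moments
    (k : ℕ) (Ω₁ Ω₂ : Type) (m₁ : MeasurableSpace Ω₁) (m₂ : MeasurableSpace Ω₂)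
    (P₁ : MeasureTheory.Measure Ω₁) (P₂ : MeasureTheory.Measure Ω₂)
    [MeasureTheory.IsProbabilityMeasure P₁] [MeasureTheory.IsProbabilityMeasure P₂]
    (X : Ω₁ → Fin k → ℝ) (X' : Ω₂ → Fin k → ℝ) (hX : Measurable X) (hX' : Measurable X')
    (h : ∀ z : Fin k → ℕ, (∀ i, 0 < z i) →
      (∫ ω, ∏ i, Real.exp (-(z i : ℝ) * Real.exp (X ω i)) ∂P₁) =
      (∫ ω, ∏ i, Real.exp (-(z i : ℝ) * Real.exp (X' ω i)) ∂P₂)) :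
    P₁.map X = P₂.map X' := by
  classical
  have hmem : ∀ a : ℝ, Real.exp (-Real.exp a) ∈ Icc (0:ℝ) 1 := fun a =>
    ⟨(Real.exp_pos _).le, by
      simpa using Real.exp_le_exp.mpr (neg_nonpos.mpr (Real.exp_pos a).le)⟩
  set φ : (Fin k → ℝ) → KK k := fun x i => ⟨Real.exp (-Real.exp (x i)), hmem _⟩ with hφdef
  have hφc : Continuous φ := continuous_pi fun i =>
    Continuous.subtype_mk
      (Real.continuous_exp.comp ((Real.continuous_exp.comp (continuous_apply i)).neg)) _
  -- density
  set dNN : KK k → ℝ≥0 := fun x => ∏ i, Real.toNNReal (x i) with hdNNdef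
  have hdNNmeas : Measurable dNN := Finset.measurable_prod _ fun i _ =>
    measurable_real_toNNReal.comp (measurable_subtype_coe.comp (measurable_pi_apply i))
  set d : KK k → ℝ≥0∞ := fun x => (dNN x : ℝ≥0∞) with hddef
  have hdmeas : Measurable d := hdNNmeas.coe_nnreal_ennreal
  have hd_le : ∀ x, d x ≤ 1 := by
    intro x
    rw [hddef]
    simp only [ENNReal.coe_le_one_iff]
    refine Finset.prod_le_one (fun i _ => zero_le) (fun i _ => ?_)
    exact Real.toNNReal_le_one.mpr (x i).2.2
  -- general facts for one space
  have key : ∀ (Ω : Type) (mΩ : MeasurableSpace Ω) (P : Measure Ω),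
      IsProbabilityMeasure P → ∀ (Y : Ω → Fin k → ℝ), Measurable Y →
      (IsFiniteMeasure ((P.map (fun ω => φ (Y ω))).withDensity d)) ∧
      (∀ n : Fin k → ℕ,
        ∫ x, (∏ i, (x i : ℝ) ^ (n i)) ∂((P.map (fun ω => φ (Y ω))).withDensity d) =
          ∫ ω, ∏ i, Real.exp (-((n i + 1 : ℕ) : ℝ) * Real.exp (Y ω i)) ∂P) ∧
      (((P.map (fun ω => φ (Y ω))).withDensity d).withDensity (fun x => (d x)⁻¹)
          = P.map (fun ω => φ (Y ω))) := by
    intro Ω mΩ P hP Y hY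
    have hF : Measurable fun ω => φ (Y ω) := hφc.measurable.comp hY
    set ν : Measure (KK k) := P.map (fun ω => φ (Y ω)) with hνdef
    have hν : IsProbabilityMeasure ν := Measure.isProbabilityMeasure_map hF.aemeasurable
    constructor
    · constructor
      rw [withDensity_apply _ MeasurableSet.univ, setLIntegral_univ]
      calc ∫⁻ x, d x ∂ν ≤ ∫⁻ _, 1 ∂ν := lintegral_mono hd_le
        _ = 1 := by simp
        _ < ⊤ := ENNReal.one_lt_top
    constructor
    · intro n
      rw [integral_withDensity_eq_integral_smul hdNNmeas]
      have hpt : (fun x : KK k => dNN x • (∏ i, (x i : ℝ) ^ (n i)))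
          = fun x : KK k => ∏ i, (x i : ℝ) ^ (n i + 1) := by
        funext x
        rw [NNReal.smul_def, smul_eq_mul]
        have hc : (dNN x : ℝ) = ∏ i, (x i : ℝ) := by
          rw [hdNNdef]
          push_cast
          exact Finset.prod_congr rfl fun i _ => Real.coe_toNNReal _ (x i).2.1
        rw [hc, ← Finset.prod_mul_distrib]
        exact Finset.prod_congr rfl fun i _ => by rw [pow_succ, mul_comm]
      rw [hpt]
      have hcont : Continuous fun x : KK k => ∏ i, (x i : ℝ) ^ (n i + 1) :=
        continuous_finset_prod _ fun i _ =>
          (continuous_subtype_val.comp (continuous_apply i)).pow _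
      rw [hνdef, integral_map hF.aemeasurable hcont.aestronglyMeasurable]
      refine integral_congr_ae (ae_of_all _ fun ω => ?_)
      refine Finset.prod_congr rfl fun i _ => ?_
      show (Real.exp (-Real.exp (Y ω i))) ^ (n i + 1) = _
      rw [← Real.exp_nat_mul, mul_neg]
      ring_nf
    · rw [← withDensity_mul _ hdmeas (show Measurable (fun x => (d x)⁻¹) from hdmeas.inv)]
      have hB : MeasurableSet {x : KK k | ∀ i, (0:ℝ) < (x i : ℝ)} := by
        rw [Set.setOf_forall]
        refine MeasurableSet.iInter fun i => ?_
        exact measurableSet_lt measurable_const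
          (measurable_subtype_coe.comp (measurable_pi_apply i))
      have hν0 : ν {x : KK k | ∀ i, (0:ℝ) < (x i : ℝ)}ᶜ = 0 := by
        rw [hνdef, Measure.map_apply hF hB.compl]
        convert measure_empty (μ := P)
        ext ω
        simp only [mem_preimage, mem_compl_iff, mem_setOf_eq, not_forall, mem_empty_iff_false,
          iff_false, not_exists]
        intro i hne
        exact hne (Real.exp_pos _)
      have h1 : ∀ᵐ x ∂ν, ∀ i, (0:ℝ) < (x i : ℝ) := by
        rw [ae_iff]
        simpa [Set.compl_setOf] using hν0
      have hae : (d * fun x => (d x)⁻¹) =ᵐ[ν] (1 : KK k → ℝ≥0∞) := by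
        filter_upwards [h1] with x hall
        have hdx0 : d x ≠ 0 := by
          rw [hddef]
          simp only [ne_eq, ENNReal.coe_eq_zero]
          rw [hdNNdef]
          exact Finset.prod_ne_zero_iff.mpr fun i _ =>
            (Real.toNNReal_pos.mpr (hall i)).ne'
        show d x * (d x)⁻¹ = 1
        exact ENNReal.mul_inv_cancel hdx0 ENNReal.coe_ne_top
      rw [withDensity_congr_ae hae, withDensity_one]
  obtain ⟨hfin₁, hmom₁, hinv₁⟩ := key Ω₁ m₁ P₁ inferInstance X hX
  obtain ⟨hfin₂, hmom₂, hinv₂⟩ := key Ω₂ m₂ P₂ inferInstance X' hX'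
  have hρ : (P₁.map (fun ω => φ (X ω))).withDensity d
      = (P₂.map (fun ω => φ (X' ω))).withDensity d := by
    haveI := hfin₁
    haveI := hfin₂
    refine measure_ext_of_moments (k := k) _ _ (fun n => ?_)
    rw [hmom₁ n, hmom₂ n]
    exact h (fun i => n i + 1) (fun i => Nat.succ_pos _)
  have hν : P₁.map (fun ω => φ (X ω)) = P₂.map (fun ω => φ (X' ω)) := by
    rw [← hinv₁, ← hinv₂, hρ]
  -- pull back
  set ψ : KK k → (Fin k → ℝ) := fun t i => Real.log (-Real.log (t i)) with hψdef
  have hψm : Measurable ψ := measurable_pi_lambda _ fun i =>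
    Real.measurable_log.comp
      ((Real.measurable_log.comp (measurable_subtype_coe.comp (measurable_pi_apply i))).neg)
  have hcomp : ∀ x : Fin k → ℝ, ψ (φ x) = x := by
    intro x; funext i
    simp [hψdef, hφdef, Real.log_exp]
  have hF₁ : Measurable fun ω => φ (X ω) := hφc.measurable.comp hX
  have hF₂ : Measurable fun ω => φ (X' ω) := hφc.measurable.comp hX'
  calc P₁.map X = (P₁.map (fun ω => φ (X ω))).map ψ := by
        rw [Measure.map_map hψm hF₁]
        congr 1
        funext ω
        exact (hcomp (X ω)).symm
    _ = (P₂.map (fun ω => φ (X' ω))).map ψ := by rw [hν]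
    _ = P₂.map X' := by
        rw [Measure.map_map hψm hF₂]
        congr 1
        funext ω
        exact hcomp (X' ω)
end
end

section
/- For t > 0 and x, y ∈ ℝ let p(t; x, y) = exp(−(x−y)²/(2t))/√(2πt). Fix λ, M > 0. Then there exists a constant C₁ > 0, depending only on λ and M, such that for all x, y ∈ [−M, M], all n ∈ ℕ and all b_n with n^{−5/4} ≤ b_n ≤ n^{−3/4}, setting W_n = λ^{−1} log n and V_n = n^{−1/3}, one has: [∫_{−∞}^{−W_n} ∫_{−∞}^{−W_n − V_n} p(n^{−2}; x, x₁)·p(2b_n; x₁, x₂)·p(n^{−2}; x₂, y) dx₂ dx₁ + ∫_{−∞}^{−W_n − V_n} ∫_{−∞}^{−W_n} p(n^{−2}; x, x₁)·p(2b_n; x₁, x₂)·p(n^{−2}; x₂, y) dx₂ dx₁] / [∫_{−∞}^{−W_n} ∫_{−∞}^{−W_n} p(n^{−2}; x, x₁)·p(2b_n; x₁, x₂)·p(n^{−2}; x₂, y) dx₂ dx₁] ≤ C₁·exp(−(1/(2λ))·n^{5/3}·log n). -/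
open MeasureTheory Filter Set Topology ProbabilityTheory
open scoped ENNReal NNReal

attribute [local instance] MeasureTheory.Measure.Subtype.measureSpace

noncomputable section

open LineEnsembles

lemma heatK_swap (t u v : ℝ) : heatK t u v = heatK t v u := by
  unfold heatK; rw [show (v-u)^2 = (u-v)^2 by ring]

lemma heatK_eq_pdf {t : ℝ} (ht : 0 < t) (a : ℝ) :
    heatK t a = gaussianPDFReal a t.toNNReal := by
  funext z
  unfold heatK gaussianPDFReal
  rw [Real.coe_toNNReal _ ht.le, div_eq_inv_mul]

lemma heatK_nonneg (t a z : ℝ) : 0 ≤ heatK t a z := by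
  unfold heatK; positivity

lemma heatK_pos {t : ℝ} (ht : 0 < t) (a z : ℝ) : 0 < heatK t a z := by
  unfold heatK
  have : 0 < 2 * Real.pi * t := by positivity
  positivity

lemma integrable_heatK {t : ℝ} (ht : 0 < t) (a : ℝ) : Integrable (heatK t a) := by
  rw [heatK_eq_pdf ht]; exact integrable_gaussianPDFReal _ _

lemma integral_heatK {t : ℝ} (ht : 0 < t) (a : ℝ) : ∫ z, heatK t a z = 1 := by
  rw [heatK_eq_pdf ht]
  exact integral_gaussianPDFReal_eq_one a (by simp [Real.toNNReal_pos.mpr ht, (Real.toNNReal_pos.mpr ht).ne'])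

lemma continuous_heatK (t a : ℝ) : Continuous (heatK t a) := by
  unfold heatK; fun_prop

lemma continuous_heatK2 (t : ℝ) : Continuous (fun p : ℝ × ℝ => heatK t p.1 p.2) := by
  unfold heatK; fun_prop

lemma heatK_le {t : ℝ} (ht : 0 < t) (a z : ℝ) : heatK t a z ≤ (Real.sqrt (2*Real.pi*t))⁻¹ := by
  unfold heatK
  rw [div_eq_inv_mul]
  have h1 : Real.exp (-((z-a)^2) / (2*t)) ≤ 1 := by
    rw [Real.exp_le_one_iff]
    exact div_nonpos_of_nonpos_of_nonneg (by nlinarith [sq_nonneg (z-a)]) (by linarith)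
  calc (Real.sqrt (2*Real.pi*t))⁻¹ * Real.exp (-((z-a)^2) / (2*t))
      ≤ (Real.sqrt (2*Real.pi*t))⁻¹ * 1 :=
        mul_le_mul_of_nonneg_left h1 (by positivity)
    _ = (Real.sqrt (2*Real.pi*t))⁻¹ := mul_one _

lemma heatK_ge {t β : ℝ} (ht : 0 < t) {a z : ℝ} (h : (z - a)^2 ≤ β) :
    (Real.sqrt (2*Real.pi*t))⁻¹ * Real.exp (-β/(2*t)) ≤ heatK t a z := by
  unfold heatK
  conv_rhs => rw [div_eq_inv_mul]
  apply mul_le_mul_of_nonneg_left _ (by positivity)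
  apply Real.exp_le_exp.mpr
  rw [div_le_div_iff_of_pos_right (by linarith : (0:ℝ) < 2*t)]
  linarith

lemma heatK_tail {t : ℝ} (ht : 0 < t) {a c : ℝ} (h : c ≤ a) :
    ∫ z in Iic c, heatK t a z ≤ Real.exp (-(a-c)^2/(2*t)) := by
  set K := Real.exp (-(a-c)^2/(2*t)) with hK
  have hK0 : 0 ≤ K := Real.exp_nonneg _
  have key : ∀ z ∈ Iic c, heatK t a z ≤ K * heatK t c z := by
    intro z hz
    simp only [Iic, mem_setOf_eq] at hz
    unfold heatK
    have hS : 0 < Real.sqrt (2*Real.pi*t) := Real.sqrt_pos.mpr (by positivity)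
    rw [hK, mul_div_assoc', div_le_div_iff_of_pos_right hS, ← Real.exp_add]
    apply Real.exp_le_exp.mpr
    rw [← add_div, div_le_div_iff_of_pos_right (by linarith : (0:ℝ) < 2*t)]
    nlinarith [mul_nonneg (sub_nonneg.2 h) (sub_nonneg.2 hz)]
  calc ∫ z in Iic c, heatK t a z
      ≤ ∫ z in Iic c, K * heatK t c z :=
        setIntegral_mono_on ((integrable_heatK ht a).integrableOn)
          (((integrable_heatK ht c).const_mul K).integrableOn) measurableSet_Iic key
    _ = K * ∫ z in Iic c, heatK t c z := integral_const_mul K _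
    _ ≤ K * 1 := by
        apply mul_le_mul_of_nonneg_left _ hK0
        rw [← integral_heatK ht c]
        exact setIntegral_le_integral (integrable_heatK ht c) (ae_of_all _ (heatK_nonneg t c))
    _ = K := mul_one K

noncomputable def JJ (b s y c x₁ : ℝ) : ℝ := ∫ z in Iic c, heatK b x₁ z * heatK s y z

lemma inner_integrable {b s : ℝ} (hb : 0 < b) (hs : 0 < s) (y x₁ : ℝ) :
    Integrable (fun z => heatK b x₁ z * heatK s y z) := by
  apply Integrable.mono' (((integrable_heatK hs y).const_mul ((Real.sqrt (2*Real.pi*b))⁻¹)))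
  · exact ((continuous_heatK b x₁).mul (continuous_heatK s y)).aestronglyMeasurable
  · refine ae_of_all _ fun z => ?_
    rw [Real.norm_eq_abs, abs_of_nonneg (mul_nonneg (heatK_nonneg _ _ _) (heatK_nonneg _ _ _))]
    exact mul_le_mul_of_nonneg_right (heatK_le hb x₁ z) (heatK_nonneg _ _ _)

lemma JJ_nonneg (b s y c x₁ : ℝ) : 0 ≤ JJ b s y c x₁ :=
  setIntegral_nonneg measurableSet_Iic fun z _ =>
    mul_nonneg (heatK_nonneg _ _ _) (heatK_nonneg _ _ _)

lemma JJ_le {b s : ℝ} (hb : 0 < b) (hs : 0 < s) (y c x₁ : ℝ) :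
    JJ b s y c x₁ ≤ (Real.sqrt (2*Real.pi*b))⁻¹ := by
  set Q := (Real.sqrt (2*Real.pi*b))⁻¹ with hQ
  have hQ0 : 0 ≤ Q := by positivity
  calc JJ b s y c x₁
      ≤ ∫ z in Iic c, Q * heatK s y z :=
        setIntegral_mono_on ((inner_integrable hb hs y x₁).integrableOn)
          (((integrable_heatK hs y).const_mul Q).integrableOn) measurableSet_Iic
          (fun z _ => mul_le_mul_of_nonneg_right (heatK_le hb x₁ z) (heatK_nonneg _ _ _))
    _ = Q * ∫ z in Iic c, heatK s y z := integral_const_mul Q _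
    _ ≤ Q * 1 := by
        apply mul_le_mul_of_nonneg_left _ hQ0
        rw [← integral_heatK hs y]
        exact setIntegral_le_integral (integrable_heatK hs y) (ae_of_all _ (heatK_nonneg s y))
    _ = Q := mul_one Q

lemma JJ_tail {b s : ℝ} (hb : 0 < b) (hs : 0 < s) {y c : ℝ} (h : c ≤ y) (x₁ : ℝ) :
    JJ b s y c x₁ ≤ (Real.sqrt (2*Real.pi*b))⁻¹ * Real.exp (-(y-c)^2/(2*s)) := by
  set Q := (Real.sqrt (2*Real.pi*b))⁻¹ with hQ
  have hQ0 : 0 ≤ Q := by positivity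
  calc JJ b s y c x₁
      ≤ ∫ z in Iic c, Q * heatK s y z :=
        setIntegral_mono_on ((inner_integrable hb hs y x₁).integrableOn)
          (((integrable_heatK hs y).const_mul Q).integrableOn) measurableSet_Iic
          (fun z _ => mul_le_mul_of_nonneg_right (heatK_le hb x₁ z) (heatK_nonneg _ _ _))
    _ = Q * ∫ z in Iic c, heatK s y z := integral_const_mul Q _
    _ ≤ Q * Real.exp (-(y-c)^2/(2*s)) :=
        mul_le_mul_of_nonneg_left (heatK_tail hs h) hQ0

lemma JJ_mono {b s : ℝ} (hb : 0 < b) (hs : 0 < s) {y c c' : ℝ} (h : c ≤ c') (x₁ : ℝ) :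
    JJ b s y c x₁ ≤ JJ b s y c' x₁ :=
  setIntegral_mono_set ((inner_integrable hb hs y x₁).integrableOn)
    (ae_of_all _ fun z => mul_nonneg (heatK_nonneg _ _ _) (heatK_nonneg _ _ _))
    ((Iic_subset_Iic.mpr h).eventuallyLE)

lemma JJ_meas (b s y c : ℝ) : StronglyMeasurable (fun x₁ => JJ b s y c x₁) := by
  apply StronglyMeasurable.integral_prod_right' (f := fun p : ℝ × ℝ => heatK b p.1 p.2 * heatK s y p.2)
  exact ((continuous_heatK2 b).mul ((continuous_heatK s y).comp continuous_snd)).stronglyMeasurable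

lemma FF_integrable {b s : ℝ} (hb : 0 < b) (hs : 0 < s) (x y c : ℝ) :
    Integrable (fun x₁ => heatK s x x₁ * JJ b s y c x₁) := by
  apply Integrable.mono' ((integrable_heatK hs x).const_mul ((Real.sqrt (2*Real.pi*b))⁻¹))
  · exact ((continuous_heatK s x).stronglyMeasurable.mul (JJ_meas b s y c)).aestronglyMeasurable
  · refine ae_of_all _ fun x₁ => ?_
    rw [Real.norm_eq_abs, abs_of_nonneg (mul_nonneg (heatK_nonneg _ _ _) (JJ_nonneg _ _ _ _ _))]
    calc heatK s x x₁ * JJ b s y c x₁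
        ≤ heatK s x x₁ * (Real.sqrt (2*Real.pi*b))⁻¹ :=
          mul_le_mul_of_nonneg_left (JJ_le hb hs y c x₁) (heatK_nonneg _ _ _)
      _ = (Real.sqrt (2*Real.pi*b))⁻¹ * heatK s x x₁ := mul_comm _ _

lemma rewriteDI {b s : ℝ} (x y c₁ c₂ : ℝ) :
    (∫ x₁ in Iic c₁, ∫ x₂ in Iic c₂, heatK s x x₁ * heatK b x₁ x₂ * heatK s x₂ y)
      = ∫ x₁ in Iic c₁, heatK s x x₁ * JJ b s y c₂ x₁ := by
  refine setIntegral_congr_fun measurableSet_Iic fun x₁ _ => ?_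
  unfold JJ
  rw [← integral_const_mul]
  refine setIntegral_congr_fun measurableSet_Iic fun x₂ _ => ?_
  rw [heatK_swap s x₂ y]
  ring

lemma num_upper {b s : ℝ} (hb : 0 < b) (hs : 0 < s) {x y c₁ c₂ : ℝ}
    (h1 : c₁ ≤ x) (h2 : c₂ ≤ y) :
    (∫ x₁ in Iic c₁, heatK s x x₁ * JJ b s y c₂ x₁)
      ≤ Real.exp (-(x-c₁)^2/(2*s)) * ((Real.sqrt (2*Real.pi*b))⁻¹ * Real.exp (-(y-c₂)^2/(2*s))) := by
  set K₂ := (Real.sqrt (2*Real.pi*b))⁻¹ * Real.exp (-(y-c₂)^2/(2*s)) with hK₂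
  have hK₂0 : 0 ≤ K₂ := by positivity
  calc (∫ x₁ in Iic c₁, heatK s x x₁ * JJ b s y c₂ x₁)
      ≤ ∫ x₁ in Iic c₁, heatK s x x₁ * K₂ := by
        apply integral_mono_of_nonneg
        · exact ae_of_all _ fun x₁ => mul_nonneg (heatK_nonneg _ _ _) (JJ_nonneg _ _ _ _ _)
        · exact ((integrable_heatK hs x).mul_const K₂).integrableOn
        · exact ae_of_all _ fun x₁ =>
            mul_le_mul_of_nonneg_left (JJ_tail hb hs h2 x₁) (heatK_nonneg _ _ _)
    _ = (∫ x₁ in Iic c₁, heatK s x x₁) * K₂ := integral_mul_const K₂ _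
    _ ≤ Real.exp (-(x-c₁)^2/(2*s)) * K₂ :=
        mul_le_mul_of_nonneg_right (heatK_tail hs h1) hK₂0

lemma den_lower {b s : ℝ} (hb : 0 < b) (hs : 0 < s) {δ βx βy x y c : ℝ} (hδ : 0 < δ)
    (hβx : ∀ z ∈ Icc (c - δ) c, (z - x)^2 ≤ βx)
    (hβy : ∀ z ∈ Icc (c - δ) c, (z - y)^2 ≤ βy) :
    δ^2 * ((Real.sqrt (2*Real.pi*s))⁻¹ * Real.exp (-βx/(2*s)))
        * ((Real.sqrt (2*Real.pi*b))⁻¹ * Real.exp (-(δ^2)/(2*b)))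
        * ((Real.sqrt (2*Real.pi*s))⁻¹ * Real.exp (-βy/(2*s)))
      ≤ ∫ x₁ in Iic c, heatK s x x₁ * JJ b s y c x₁ := by
  set Lx := (Real.sqrt (2*Real.pi*s))⁻¹ * Real.exp (-βx/(2*s)) with hLx
  set Lb := (Real.sqrt (2*Real.pi*b))⁻¹ * Real.exp (-(δ^2)/(2*b)) with hLb
  set Ly := (Real.sqrt (2*Real.pi*s))⁻¹ * Real.exp (-βy/(2*s)) with hLy
  have hLx0 : 0 ≤ Lx := by positivity
  have hLb0 : 0 ≤ Lb := by positivity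
  have hLy0 : 0 ≤ Ly := by positivity
  have hsub : Icc (c - δ) c ⊆ Iic c := fun z hz => hz.2
  have hIccVol : (volume (Icc (c - δ) c)).toReal = δ := by
    rw [Real.volume_Icc, show c - (c - δ) = δ by ring, ENNReal.toReal_ofReal hδ.le]
  have hJbox : ∀ x₁ ∈ Icc (c - δ) c, δ * (Lb * Ly) ≤ JJ b s y c x₁ := by
    intro x₁ h₁
    have step2 : ∀ z ∈ Icc (c - δ) c, Lb * Ly ≤ heatK b x₁ z * heatK s y z := by
      intro z hz
      apply mul_le_mul _ _ hLy0 (heatK_nonneg _ _ _)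
      · exact heatK_ge hb (by nlinarith [h₁.1, h₁.2, hz.1, hz.2])
      · exact heatK_ge hs (hβy z hz)
    calc δ * (Lb * Ly) = ∫ _z in Icc (c - δ) c, (Lb * Ly) := by
          rw [setIntegral_const, measureReal_def, hIccVol, smul_eq_mul]
      _ ≤ ∫ z in Icc (c - δ) c, heatK b x₁ z * heatK s y z :=
          setIntegral_mono_on ((integrableOn_const_iff (by finiteness)).mpr (Or.inr (by
            rw [Real.volume_Icc]; exact ENNReal.ofReal_lt_top)))
            ((inner_integrable hb hs y x₁).integrableOn) measurableSet_Icc step2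
      _ ≤ JJ b s y c x₁ :=
          setIntegral_mono_set ((inner_integrable hb hs y x₁).integrableOn)
            (ae_of_all _ fun z => mul_nonneg (heatK_nonneg _ _ _) (heatK_nonneg _ _ _))
            hsub.eventuallyLE
  have houter : ∀ x₁ ∈ Icc (c - δ) c, Lx * (δ * (Lb * Ly)) ≤ heatK s x x₁ * JJ b s y c x₁ := by
    intro x₁ h₁
    apply mul_le_mul _ (hJbox x₁ h₁) (by positivity) (heatK_nonneg _ _ _)
    exact heatK_ge hs (hβx x₁ h₁)
  calc δ^2 * Lx * Lb * Ly = ∫ _x₁ in Icc (c - δ) c, Lx * (δ * (Lb * Ly)) := by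
        rw [setIntegral_const, measureReal_def, hIccVol, smul_eq_mul]; ring
    _ ≤ ∫ x₁ in Icc (c - δ) c, heatK s x x₁ * JJ b s y c x₁ :=
        setIntegral_mono_on ((integrableOn_const_iff (by finiteness)).mpr (Or.inr (by
          rw [Real.volume_Icc]; exact ENNReal.ofReal_lt_top)))
          ((FF_integrable hb hs x y c).integrableOn) measurableSet_Icc houter
    _ ≤ ∫ x₁ in Iic c, heatK s x x₁ * JJ b s y c x₁ :=
        setIntegral_mono_set ((FF_integrable hb hs x y c).integrableOn)
          (ae_of_all _ fun x₁ => mul_nonneg (heatK_nonneg _ _ _) (JJ_nonneg _ _ _ _ _))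
          hsub.eventuallyLE

lemma numA_le_den {b s : ℝ} (hb : 0 < b) (hs : 0 < s) {V : ℝ} (hV : 0 ≤ V) (x y c : ℝ) :
    (∫ x₁ in Iic c, heatK s x x₁ * JJ b s y (c - V) x₁)
      ≤ ∫ x₁ in Iic c, heatK s x x₁ * JJ b s y c x₁ := by
  apply integral_mono_of_nonneg
  · exact ae_of_all _ fun x₁ => mul_nonneg (heatK_nonneg _ _ _) (JJ_nonneg _ _ _ _ _)
  · exact (FF_integrable hb hs x y c).integrableOn
  · exact ae_of_all _ fun x₁ =>
      mul_le_mul_of_nonneg_left (JJ_mono hb hs (by linarith) x₁) (heatK_nonneg _ _ _)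

lemma numB_le_den {b s : ℝ} (hb : 0 < b) (hs : 0 < s) {V : ℝ} (hV : 0 ≤ V) (x y c : ℝ) :
    (∫ x₁ in Iic (c - V), heatK s x x₁ * JJ b s y c x₁)
      ≤ ∫ x₁ in Iic c, heatK s x x₁ * JJ b s y c x₁ :=
  setIntegral_mono_set ((FF_integrable hb hs x y c).integrableOn)
    (ae_of_all _ fun x₁ => mul_nonneg (heatK_nonneg _ _ _) (JJ_nonneg _ _ _ _ _))
    ((Iic_subset_Iic.mpr (by linarith)).eventuallyLE)

lemma exp_shift {s V W M u : ℝ} (hs : 0 < s) (hV : 0 ≤ V) (hu : W - M ≤ u) :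
    Real.exp (-(u+V)^2/(2*s)) ≤ Real.exp (-u^2/(2*s)) * Real.exp (-(V*(W-M))/s) := by
  rw [← Real.exp_add]
  apply Real.exp_le_exp.mpr
  rw [show -u^2/(2*s) + -(V*(W-M))/s = (-u^2 + -(2*V*(W-M)))/(2*s) by field_simp]
  rw [div_le_div_iff_of_pos_right (by linarith : (0:ℝ) < 2*s)]
  nlinarith [mul_nonneg hV (sub_nonneg.2 hu), sq_nonneg V]

lemma exp_assembly (a1 a2 a3 c0 c1 c2 b1 b2 b3 s Qb : ℝ) (hQb : 0 ≤ Qb)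
    (hs : s = Real.exp c2)
    (h : a1 + a2 + a3 + 3 ≤ c0 + c1 + c2 + b1 + b2 + b3) :
    2 * (Real.exp a1 * Real.exp a2 * Real.exp a3) * Qb ≤
      (2 * Real.exp c0 * Real.exp c1) *
        (Qb * (s / (2 * Real.pi) * (Real.exp b1 * (Real.exp b2 * Real.exp b3)))) := by
  subst hs
  have hπ : 0 < Real.pi := Real.pi_pos
  have h2pi : 2 * Real.pi ≤ Real.exp 3 := by
    have he : (2:ℝ) ≤ Real.exp 1 := by linarith [Real.add_one_le_exp 1]
    have h8 : (8:ℝ) ≤ Real.exp 3 := by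
      rw [show (3:ℝ) = 1 + 1 + 1 by norm_num, Real.exp_add, Real.exp_add]
      nlinarith [Real.exp_pos 1]
    linarith [Real.pi_le_four]
  have key : 2 * (Real.exp a1 * Real.exp a2 * Real.exp a3) ≤
      (Real.exp c0 * Real.exp c1 * Real.exp c2 * (Real.exp b1 * (Real.exp b2 * Real.exp b3))) / Real.pi := by
    rw [le_div_iff₀ hπ]
    calc 2 * (Real.exp a1 * Real.exp a2 * Real.exp a3) * Real.pi
        = Real.exp (a1 + (a2 + a3)) * (2 * Real.pi) := by
          rw [Real.exp_add, Real.exp_add]; ring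
      _ ≤ Real.exp (a1 + (a2 + a3)) * Real.exp 3 :=
          mul_le_mul_of_nonneg_left h2pi (Real.exp_nonneg _)
      _ = Real.exp (a1 + (a2 + a3) + 3) := by rw [← Real.exp_add]
      _ ≤ Real.exp (c0 + c1 + c2 + (b1 + (b2 + b3))) := Real.exp_le_exp.mpr (by linarith)
      _ = Real.exp c0 * Real.exp c1 * Real.exp c2 * (Real.exp b1 * (Real.exp b2 * Real.exp b3)) := by
          rw [Real.exp_add, Real.exp_add, Real.exp_add, Real.exp_add, Real.exp_add]
  calc 2 * (Real.exp a1 * Real.exp a2 * Real.exp a3) * Qb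
      ≤ ((Real.exp c0 * Real.exp c1 * Real.exp c2 * (Real.exp b1 * (Real.exp b2 * Real.exp b3))) / Real.pi) * Qb :=
        mul_le_mul_of_nonneg_right key hQb
    _ = (2 * Real.exp c0 * Real.exp c1) *
        (Qb * (Real.exp c2 / (2 * Real.pi) * (Real.exp b1 * (Real.exp b2 * Real.exp b3)))) := by
        field_simp

lemma box_sq_big {W δ M u z : ℝ} (hz1 : -W - δ ≤ z) (hz2 : z ≤ -W) (hu1 : -M ≤ u)
    (hMW : M ≤ W) : (z - u)^2 ≤ (u + W + δ)^2 := by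
  nlinarith [mul_nonneg (show (0:ℝ) ≤ (u+W+δ) - (u-z) by linarith)
    (show (0:ℝ) ≤ (u+W+δ) + (u-z) by linarith)]

lemma box_sq_small {W δ M u z : ℝ} (hz1 : -W - δ ≤ z) (hz2 : z ≤ -W) (hu1 : -M ≤ u)
    (hu2 : u ≤ M) (hW : 0 ≤ W) (hδ : 0 ≤ δ) : (z - u)^2 ≤ (M + W + δ)^2 := by
  nlinarith [mul_nonneg (show (0:ℝ) ≤ (M+W+δ) + (z-u) by linarith)
    (show (0:ℝ) ≤ (M+W+δ) - (z-u) by linarith)]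

lemma diff_sq_div {s W M u : ℝ} (hs : 0 < s) (hs1 : s ≤ 1) (hu : u ≤ M) (hW : 0 ≤ W) :
    -(u+W)^2/(2*s) - (-(u+W+s)^2/(2*s)) ≤ W + M + 1 := by
  rw [div_sub_div_same, div_le_iff₀ (by linarith : (0:ℝ) < 2*s)]
  nlinarith [mul_nonneg hs.le (sub_nonneg.2 hu), mul_nonneg hs.le (sub_nonneg.2 hs1)]

lemma core_ineq {W M l ν : ℝ} (hν : 8*l + 2*M + 26 ≤ ν) (hW4 : 4*(M+1) ≤ W)
    (hM : 0 < M) (hl : 0 < l) (hν0 : 0 ≤ ν) :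
    2*W + 2*M + 6 + 2*(l*W) ≤ ν*(W-M) - ν*W/2 := by
  nlinarith [mul_nonneg (sub_nonneg.2 hν) (show (0:ℝ) ≤ W by linarith),
    mul_nonneg (show (0:ℝ) ≤ 2*M+18 by linarith) (show (0:ℝ) ≤ W - 4 by linarith),
    mul_nonneg hν0 (show (0:ℝ) ≤ W - 4*M by linarith)]

set_option maxHeartbeats 1000000 in
/-- STATEMENT 15 -/
theorem gaussian_tail_ratio_estimate
    (l M : ℝ) (hl : 0 < l) (hM : 0 < M) :
    ∃ C₁ : ℝ, 0 < C₁ ∧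
      ∀ x ∈ Set.Icc (-M) M, ∀ y ∈ Set.Icc (-M) M,
      ∀ n : ℕ, 1 ≤ n →
      ∀ bn : ℝ, (n : ℝ) ^ (-(5 : ℝ)/4) ≤ bn → bn ≤ (n : ℝ) ^ (-(3 : ℝ)/4) →
      ∀ Wn : ℝ, Wn = Real.log n / l →
      ∀ Vn : ℝ, Vn = (n : ℝ) ^ (-(1 : ℝ)/3) →
      ((∫ x₁ in Set.Iic (-Wn), ∫ x₂ in Set.Iic (-Wn - Vn),
          heatK ((n : ℝ) ^ (-(2 : ℝ))) x x₁ * heatK (2 * bn) x₁ x₂ *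
            heatK ((n : ℝ) ^ (-(2 : ℝ))) x₂ y) +
        (∫ x₁ in Set.Iic (-Wn - Vn), ∫ x₂ in Set.Iic (-Wn),
          heatK ((n : ℝ) ^ (-(2 : ℝ))) x x₁ * heatK (2 * bn) x₁ x₂ *
            heatK ((n : ℝ) ^ (-(2 : ℝ))) x₂ y)) /
        (∫ x₁ in Set.Iic (-Wn), ∫ x₂ in Set.Iic (-Wn),
          heatK ((n : ℝ) ^ (-(2 : ℝ))) x x₁ * heatK (2 * bn) x₁ x₂ *
            heatK ((n : ℝ) ^ (-(2 : ℝ))) x₂ y) ≤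
      C₁ * Real.exp (-(1 / (2 * l)) * (n : ℝ) ^ ((5 : ℝ)/3) * Real.log n) := by
  set R : ℝ := max (Real.exp (4*l*(M+1))) (8*l + 2*M + 26) with hR
  have hR26 : 26 ≤ R := le_trans (by linarith) (le_max_right _ _)
  refine ⟨2 * Real.exp (R^3 / (2*l)), by positivity, ?_⟩
  rintro x hx y hy n hn bn hbn1 hbn2 Wn hWn Vn hVn
  obtain ⟨hx1, hx2⟩ := hx
  obtain ⟨hy1, hy2⟩ := hy
  subst hWn hVn
  have hn1 : (1:ℝ) ≤ (n:ℝ) := by exact_mod_cast hn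
  have hn0 : (0:ℝ) < (n:ℝ) := by linarith
  set s : ℝ := (n:ℝ) ^ (-(2:ℝ)) with hs_def
  have hs : 0 < s := Real.rpow_pos_of_pos hn0 _
  have hs1 : s ≤ 1 := Real.rpow_le_one_of_one_le_of_nonpos hn1 (by norm_num)
  have hbn0 : 0 < bn := lt_of_lt_of_le (Real.rpow_pos_of_pos hn0 _) hbn1
  set b : ℝ := 2 * bn with hb_def
  have hb : 0 < b := by positivity
  set W : ℝ := Real.log n / l with hW_def
  have hW0 : 0 ≤ W := div_nonneg (Real.log_nonneg hn1) hl.le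
  set V : ℝ := (n:ℝ) ^ (-(1:ℝ)/3) with hV_def
  have hV : 0 < V := Real.rpow_pos_of_pos hn0 _
  set ν : ℝ := (n:ℝ) ^ ((5:ℝ)/3) with hν_def
  have hν0 : 0 < ν := Real.rpow_pos_of_pos hn0 _
  set Qb : ℝ := (Real.sqrt (2*Real.pi*b))⁻¹ with hQb_def
  set Qs : ℝ := (Real.sqrt (2*Real.pi*s))⁻¹ with hQs_def
  have hQb0 : 0 ≤ Qb := by positivity
  rw [rewriteDI, rewriteDI, rewriteDI]
  set A : ℝ := ∫ x₁ in Iic (-W), heatK s x x₁ * JJ b s y (-W - V) x₁ with hA_def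
  set B : ℝ := ∫ x₁ in Iic (-W - V), heatK s x x₁ * JJ b s y (-W) x₁ with hB_def
  set D : ℝ := ∫ x₁ in Iic (-W), heatK s x x₁ * JJ b s y (-W) x₁ with hD_def
  have hlogW : Real.log n = l * W := by rw [hW_def]; field_simp
  rcases le_or_gt R (n:ℝ) with hbig | hsmall
  · -- large n branch
    have hlogR : 4*l*(M+1) ≤ Real.log n := by
      have h1 : Real.exp (4*l*(M+1)) ≤ (n:ℝ) := le_trans (le_max_left _ _) hbig
      have := Real.log_le_log (Real.exp_pos _) h1
      rwa [Real.log_exp] at this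
    have hW4 : 4*(M+1) ≤ W := by
      rw [hW_def, le_div_iff₀ hl]; nlinarith
    have hWM : M + 1 ≤ W := by nlinarith
    have hnR2 : 8*l + 2*M + 26 ≤ (n:ℝ) := le_trans (le_max_right _ _) hbig
    -- numerator bounds
    have hA1 : A ≤ Real.exp (-(x - -W)^2/(2*s)) * (Qb * Real.exp (-(y - (-W - V))^2/(2*s))) :=
      num_upper hb hs (by linarith) (by linarith)
    have hB1 : B ≤ Real.exp (-(x - (-W - V))^2/(2*s)) * (Qb * Real.exp (-(y - -W)^2/(2*s))) :=
      num_upper hb hs (by linarith) (by linarith)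
    rw [show x - -W = x + W by ring, show y - (-W - V) = y + W + V by ring] at hA1
    rw [show y - -W = y + W by ring, show x - (-W - V) = x + W + V by ring] at hB1
    have hshx : Real.exp (-(x + W + V)^2/(2*s)) ≤
        Real.exp (-(x + W)^2/(2*s)) * Real.exp (-(V*(W-M))/s) :=
      exp_shift hs hV.le (by linarith : W - M ≤ x + W)
    have hshy : Real.exp (-(y + W + V)^2/(2*s)) ≤
        Real.exp (-(y + W)^2/(2*s)) * Real.exp (-(V*(W-M))/s) :=
      exp_shift hs hV.le (by linarith : W - M ≤ y + W)
    set e1 : ℝ := Real.exp (-(x + W)^2/(2*s))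
    set e2 : ℝ := Real.exp (-(y + W)^2/(2*s))
    set e3 : ℝ := Real.exp (-(V*(W-M))/s)
    have hNum : A + B ≤ 2 * (e1 * e2 * e3) * Qb := by
      have hA2 : A ≤ e1 * (Qb * (e2 * e3)) := by
        refine hA1.trans ?_
        exact mul_le_mul_of_nonneg_left (mul_le_mul_of_nonneg_left hshy hQb0)
          (Real.exp_nonneg _)
      have hB2 : B ≤ (e1 * e3) * (Qb * e2) := by
        refine hB1.trans ?_
        exact mul_le_mul_of_nonneg_right hshx (by positivity)
      calc A + B ≤ e1 * (Qb * (e2 * e3)) + (e1 * e3) * (Qb * e2) := add_le_add hA2 hB2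
        _ = 2 * (e1 * e2 * e3) * Qb := by ring
    -- denominator lower bound
    have hβx : ∀ z ∈ Icc ((-W) - s) (-W), (z - x)^2 ≤ (x + W + s)^2 := fun z hz =>
      box_sq_big hz.1 hz.2 hx1 (by linarith)
    have hβy : ∀ z ∈ Icc ((-W) - s) (-W), (z - y)^2 ≤ (y + W + s)^2 := fun z hz =>
      box_sq_big hz.1 hz.2 hy1 (by linarith)
    set L : ℝ := s^2 * (Qs * Real.exp (-(x+W+s)^2/(2*s)))
        * (Qb * Real.exp (-(s^2)/(2*b))) * (Qs * Real.exp (-(y+W+s)^2/(2*s))) with hL_def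
    have hDL : L ≤ D := den_lower hb hs hs hβx hβy
    have hL0 : 0 < L := by
      have h1 : 0 < Qs := by positivity
      have h2 : 0 < Qb := by positivity
      positivity
    have hL2 : L = Qb * (s/(2*Real.pi) * (Real.exp (-(x+W+s)^2/(2*s)) *
        (Real.exp (-(s^2)/(2*b)) * Real.exp (-(y+W+s)^2/(2*s))))) := by
      have hQQ : Qs * Qs * s^2 = s/(2*Real.pi) := by
        rw [hQs_def, ← mul_inv, Real.mul_self_sqrt (by positivity)]
        field_simp
      calc L = (Qs * Qs * s^2) * (Qb * (Real.exp (-(x+W+s)^2/(2*s)) *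
          (Real.exp (-(s^2)/(2*b)) * Real.exp (-(y+W+s)^2/(2*s))))) := by rw [hL_def]; ring
        _ = _ := by rw [hQQ]; ring
    -- the exponent inequality
    have h2s : (0:ℝ) < 2*s := by linarith
    have hs_exp : s = Real.exp (-(2*Real.log n)) := by
      rw [hs_def, Real.rpow_def_of_pos hn0, show Real.log n * -(2:ℝ) = -(2*Real.log n) by ring]
    have hVs : V / s = ν := by
      rw [hV_def, hs_def, hν_def, div_eq_mul_inv, ← Real.rpow_neg hn0.le, neg_neg,
        ← Real.rpow_add hn0]
      norm_num
    have hνn : (n:ℝ) ≤ ν := by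
      calc (n:ℝ) = (n:ℝ) ^ (1:ℝ) := (Real.rpow_one _).symm
        _ ≤ ν := Real.rpow_le_rpow_of_exponent_le hn1 (by norm_num)
    have hs2b : s^2 ≤ 2*b := by
      have h4 : s^2 = (n:ℝ) ^ (-(4:ℝ)) := by
        rw [hs_def, ← Real.rpow_natCast ((n:ℝ) ^ (-(2:ℝ))) 2, ← Real.rpow_mul hn0.le]
        norm_num
      have h5 : (n:ℝ) ^ (-(4:ℝ)) ≤ (n:ℝ) ^ (-(5:ℝ)/4) :=
        Real.rpow_le_rpow_of_exponent_le hn1 (by norm_num)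
      calc s^2 = (n:ℝ) ^ (-(4:ℝ)) := h4
        _ ≤ (n:ℝ) ^ (-(5:ℝ)/4) := h5
        _ ≤ bn := hbn1
        _ ≤ 2*b := by rw [hb_def]; linarith
    have hd1 : -(x+W)^2/(2*s) - (-(x+W+s)^2/(2*s)) ≤ W + M + 1 :=
      diff_sq_div hs hs1 hx2 hW0
    have hd2 : -(y+W)^2/(2*s) - (-(y+W+s)^2/(2*s)) ≤ W + M + 1 :=
      diff_sq_div hs hs1 hy2 hW0
    have hd3 : -(1:ℝ) ≤ -(s^2)/(2*b) := by
      rw [neg_div, neg_le_neg_iff, div_le_one (by linarith)]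
      exact hs2b
    have hVterm : -(V*(W-M))/s = -(ν*(W-M)) := by
      rw [show -(V*(W-M))/s = -((V/s)*(W-M)) by ring, hVs]
    have hc1 : -(1/(2*l)) * ν * Real.log n = -(ν*W)/2 := by
      rw [hlogW]; field_simp
    have hcore : 2*W + 2*M + 6 + 2*(l*W) ≤ ν*(W-M) - ν*W/2 :=
      core_ineq (le_trans hnR2 hνn) hW4 hM hl hν0.le
    have hexp : -(x+W)^2/(2*s) + -(y+W)^2/(2*s) + -(V*(W-M))/s + 3 ≤
        R^3/(2*l) + (-(1/(2*l)) * ν * Real.log n) + (-(2*Real.log n)) +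
        (-(x+W+s)^2/(2*s)) + (-(s^2)/(2*b)) + (-(y+W+s)^2/(2*s)) := by
      rw [hVterm, hc1, hlogW]
      have hc0 : (0:ℝ) ≤ R^3/(2*l) := by positivity
      linarith [hd1, hd2, hd3, hcore]
    -- final assembly
    calc (A + B) / D ≤ (2 * (e1 * e2 * e3) * Qb) / L :=
        div_le_div₀ (by positivity) hNum hL0 hDL
      _ ≤ 2 * Real.exp (R^3/(2*l)) * Real.exp (-(1/(2*l)) * ν * Real.log n) := by
          rw [div_le_iff₀ hL0, hL2]
          exact exp_assembly _ _ _ _ _ _ _ _ _ s Qb hQb0 hs_exp hexp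
  · -- small n branch
    have hβx : ∀ z ∈ Icc ((-W) - 1) (-W), (z - x)^2 ≤ (M+W+1)^2 := fun z hz =>
      box_sq_small hz.1 hz.2 hx1 hx2 hW0 zero_le_one
    have hβy : ∀ z ∈ Icc ((-W) - 1) (-W), (z - y)^2 ≤ (M+W+1)^2 := fun z hz =>
      box_sq_small hz.1 hz.2 hy1 hy2 hW0 zero_le_one
    have hDL := den_lower (x := x) (y := y) hb hs one_pos hβx hβy
    have hD0 : 0 < D := lt_of_lt_of_le (by
        have h1 : 0 < Qs := by positivity
        have h2 : 0 < Qb := by positivity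
        positivity) hDL
    have hA1 : A ≤ D := by
      have := numA_le_den hb hs hV.le x y (-W)
      simpa using this
    have hB1 : B ≤ D := by
      have := numB_le_den hb hs hV.le x y (-W)
      simpa using this
    have hratio : (A + B) / D ≤ 2 := by
      rw [div_le_iff₀ hD0]; linarith
    refine hratio.trans ?_
    have hX : ν * Real.log n ≤ R^3 := by
      have hν2 : ν ≤ (n:ℝ) ^ (2:ℝ) := Real.rpow_le_rpow_of_exponent_le hn1 (by norm_num)
      have h2 : (n:ℝ) ^ (2:ℝ) = (n:ℝ)^(2:ℕ) := by
        rw [← Real.rpow_natCast (n:ℝ) 2]; norm_num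
      have hlog : Real.log n ≤ (n:ℝ) := by
        linarith [Real.log_le_sub_one_of_pos hn0]
      have hlog0 : 0 ≤ Real.log n := Real.log_nonneg hn1
      have hn3 : (n:ℝ)^(3:ℕ) ≤ R^3 := by
        apply pow_le_pow_left₀ hn0.le hsmall.le
      calc ν * Real.log n ≤ (n:ℝ)^(2:ℕ) * (n:ℝ) := by
            apply mul_le_mul (by rw [← h2]; exact hν2) hlog hlog0 (by positivity)
        _ = (n:ℝ)^(3:ℕ) := by ring
        _ ≤ R^3 := hn3
    calc (2:ℝ) = 2 * 1 := by ring
      _ ≤ 2 * Real.exp (R^3/(2*l) + (-(1/(2*l)) * ν * Real.log n)) := by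
          apply mul_le_mul_of_nonneg_left _ (by norm_num)
          apply Real.one_le_exp
          rw [show R^3/(2*l) + (-(1/(2*l)) * ν * Real.log n)
            = (R^3 - ν * Real.log n)/(2*l) by field_simp; ring]
          exact div_nonneg (by linarith [hX]) (by linarith)
      _ = 2 * Real.exp (R^3/(2*l)) * Real.exp (-(1/(2*l)) * ν * Real.log n) := by
          rw [Real.exp_add]; ring
end
end

section
/- Fix λ > 0, a λ-exponential Hamiltonian H, M > 0, β > 0 and ε₁, ε₂ ∈ (0,1). Then there exists W₁ ∈ ℕ, depending only on λ, H, M, β, ε₁, such that for every integer w ≥ W₁ the following holds. Set A_w = λ^{−1} log w and V_w = w^{−1/3}; let t ∈ ℝ and set c_w = t − β/H(A_w), d_w = t + β/H(A_w), a_w = c_w − w^{−2}, b_w = d_w + w^{−2}. Then for every pair of continuous functions g, Q: [a_w, b_w] → ℝ satisfying: sup_{u∈[a_w,b_w]} |g(u)| ≤ M; |g(u) − g(t)| ≤ ε₂ for all u ∈ [a_w, b_w]; −A_w − 1 ≤ Q(u) ≤ M + 1 for all u ∈ [a_w, c_w] ∪ [d_w, b_w]; and −A_w − 2V_w ≤ Q(u)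 ≤ −A_w + 2V_w for all u ∈ [c_w, d_w], one has exp(−ε₁·(1 + 2β) − 2β·(1 + ε₁)·e^{λ·ε₂}·exp(λ·g(t))) ≤ exp(−∫_{a_w}^{b_w} H(g(u) − Q(u)) du) ≤ exp(2β·ε₁ − 2β·(1 − ε₁)·e^{−λ·ε₂}·exp(λ·g(t))). -/
open MeasureTheory Filter Set Topology ProbabilityTheory
open scoped ENNReal NNReal

attribute [local instance] MeasureTheory.Measure.Subtype.measureSpace

noncomputable section

open LineEnsembles

section AuxLemmas

lemma aux_exp_le_one_add_two_mul {x : ℝ} (h0 : 0 ≤ x) (h1 : x ≤ 1/2) :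
    Real.exp x ≤ 1 + 2*x := by
  have key : Real.exp x * Real.exp (-x) = 1 := by rw [← Real.exp_add]; simp
  have h2 := Real.add_one_le_exp (-x)
  nlinarith [Real.exp_pos x, Real.exp_pos (-x)]

lemma aux_cont {H : EReal → ℝ} (hc : ContinuousOn H {x : EReal | x ≠ ⊤}) :
    Continuous (fun x : ℝ => H ((x : ℝ) : EReal)) :=
  hc.comp_continuous continuous_coe_real_ereal (fun x => EReal.coe_ne_top x)

lemma aux_le_biSup {s : Set ℝ} (hs : IsCompact s) {φ : ℝ → ℝ} (hφ : ContinuousOn φ s)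
    {x : ℝ} (hx : x ∈ s) : φ x ≤ ⨆ y ∈ s, φ y := by
  obtain ⟨B, hB⟩ := (hs.image_of_continuousOn hφ).bddAbove
  have hbdd : BddAbove (Set.range fun y => ⨆ _ : y ∈ s, φ y) := by
    refine ⟨max B 0, ?_⟩
    rintro z ⟨y, rfl⟩
    by_cases h : y ∈ s
    · have : (⨆ _ : y ∈ s, φ y) = φ y := ciSup_pos (f := fun _ : y ∈ s => φ y) h
      simp only [this]
      exact le_max_of_le_left (hB ⟨y, h, rfl⟩)
    · simp only [ciSup_neg h, Real.sSup_empty]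
      exact le_max_right _ _
  calc φ x = ⨆ _ : x ∈ s, φ x := (ciSup_pos (f := fun _ : x ∈ s => φ x) hx).symm
    _ ≤ ⨆ y, ⨆ _ : y ∈ s, φ y := le_ciSup hbdd x

lemma aux_growth {F : ℝ → ℝ} (hc : Continuous F) (Y₀ K : ℝ) (hK : 1 ≤ K)
    (step : ∀ y, Y₀ ≤ y → F (y + 1) ≤ K * F y) :
    ∃ C : ℝ, 0 ≤ C ∧ ∀ y, Y₀ ≤ y → F y ≤ C * K ^ (⌊y - Y₀⌋₊) := by
  obtain ⟨C₀, hC₀⟩ := (isCompact_Icc (a := Y₀) (b := Y₀ + 1)).bddAbove_image hc.continuousOn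
  refine ⟨max C₀ 0, le_max_right _ _, ?_⟩
  have hCmax : ∀ y ∈ Icc Y₀ (Y₀ + 1), F y ≤ max C₀ 0 := fun y hy =>
    le_max_of_le_left (hC₀ ⟨y, hy, rfl⟩)
  have claim : ∀ n : ℕ, ∀ y : ℝ, Y₀ + n ≤ y → y ≤ Y₀ + n + 1 → F y ≤ max C₀ 0 * K ^ n := by
    intro n
    induction n with
    | zero => intro y h1 h2; simpa using hCmax y ⟨by simpa using h1, by simpa using h2⟩
    | succ n ih =>
      intro y h1 h2
      have hy1 : Y₀ + n ≤ y - 1 := by push_cast at h1 ⊢; linarith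
      have hy2 : y - 1 ≤ Y₀ + n + 1 := by push_cast at h2 ⊢; linarith
      have hY : Y₀ ≤ y - 1 :=
        le_trans (by linarith [(Nat.cast_nonneg n : (0:ℝ) ≤ n)] : Y₀ ≤ Y₀ + (n:ℝ)) hy1
      have h3 := step (y - 1) hY
      have h4 := ih (y - 1) hy1 hy2
      have h5 : K * F (y - 1) ≤ K * (max C₀ 0 * K ^ n) :=
        mul_le_mul_of_nonneg_left h4 (by linarith)
      have : F y = F ((y - 1) + 1) := by ring_nf
      rw [this]
      calc F ((y-1)+1) ≤ K * F (y-1) := h3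
        _ ≤ K * (max C₀ 0 * K ^ n) := h5
        _ = max C₀ 0 * K ^ (n+1) := by ring
  intro y hy
  have h1 : Y₀ + (⌊y - Y₀⌋₊ : ℝ) ≤ y := by
    have := Nat.floor_le (sub_nonneg.2 hy); linarith
  have h2 : y ≤ Y₀ + ⌊y - Y₀⌋₊ + 1 := by
    have := Nat.lt_floor_add_one (y - Y₀); linarith
  exact claim _ y h1 h2

end AuxLemmas

set_option maxHeartbeats 1000000 in
/-- STATEMENT 19 -/
theorem boltzmann_weight_two_sided_bound
    (l : ℝ) (hl : 0 < l) (H : EReal → ℝ) (hH : IsLambdaExpHamiltonian l H)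
    (M β ε₁ : ℝ) (hM : 0 < M) (hβ : 0 < β) (hε₁ : ε₁ ∈ Set.Ioo (0 : ℝ) 1) :
    ∃ W₁ : ℕ,
      ∀ ε₂ : ℝ, ε₂ ∈ Set.Ioo (0 : ℝ) 1 →
      ∀ w : ℕ, W₁ ≤ w →
      ∀ t : ℝ,
      ∀ Aw : ℝ, Aw = Real.log w / l →
      ∀ Vw : ℝ, Vw = (w : ℝ) ^ (-(1 : ℝ)/3) →
      ∀ cw : ℝ, cw = t - β / H ((Aw : ℝ) : EReal) →
      ∀ dw : ℝ, dw = t + β / H ((Aw : ℝ) : EReal) →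
      ∀ aw : ℝ, aw = cw - (w : ℝ) ^ (-(2 : ℝ)) →
      ∀ bw : ℝ, bw = dw + (w : ℝ) ^ (-(2 : ℝ)) →
      ∀ g Q : ℝ → ℝ, ContinuousOn g (Set.Icc aw bw) → ContinuousOn Q (Set.Icc aw bw) →
        (∀ u ∈ Set.Icc aw bw, |g u| ≤ M) →
        (∀ u ∈ Set.Icc aw bw, |g u - g t| ≤ ε₂) →
        (∀ u ∈ Set.Icc aw bw, (u ≤ cw ∨ dw ≤ u) → -Aw - 1 ≤ Q u ∧ Q u ≤ M + 1) →
        (∀ u ∈ Set.Icc cw dw, -Aw - 2 * Vw ≤ Q u ∧ Q u ≤ -Aw + 2 * Vw) →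
        Real.exp (-ε₁ * (1 + 2 * β) -
            2 * β * (1 + ε₁) * Real.exp (l * ε₂) * Real.exp (l * g t)) ≤
          Real.exp (-(∫ u in Set.Icc aw bw, H ((g u - Q u : ℝ) : EReal))) ∧
        Real.exp (-(∫ u in Set.Icc aw bw, H ((g u - Q u : ℝ) : EReal))) ≤
          Real.exp (2 * β * ε₁ -
            2 * β * (1 - ε₁) * Real.exp (-(l * ε₂)) * Real.exp (l * g t)) := by
  classical
  obtain ⟨⟨Hcont, Hnn⟩, Hconv, Hlim⟩ := hH
  have Hc : Continuous (fun x : ℝ => H ((x : ℝ) : EReal)) := aux_cont Hcont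
  have Hnn' : ∀ x : ℝ, 0 ≤ H ((x : ℝ) : EReal) := fun x => Hnn _ (EReal.coe_ne_top x)
  obtain ⟨hε₁0, hε₁1⟩ := hε₁
  set N : ℕ := ⌈M⌉₊ + 3 with hNdef
  have hMN : M + 3 ≤ (N : ℝ) := by
    have h := Nat.le_ceil M
    have h2 : ((⌈M⌉₊ : ℝ) + 3) = (N : ℝ) := by rw [hNdef]; push_cast; ring
    linarith
  have hN1 : (1:ℝ) ≤ (N:ℝ) := by linarith
  set δ : ℝ := min ((ε₁/2) * Real.exp (-(l*(M+1))))
    (min (1/2) (Real.exp l * (Real.exp (l/2) - 1))) with hδdef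
  have hexp2 : (0:ℝ) < Real.exp (l/2) - 1 := by
    have := Real.add_one_le_exp (l/2); linarith
  have hδpos : 0 < δ := by
    apply lt_min (by positivity)
    exact lt_min (by norm_num) (mul_pos (Real.exp_pos l) hexp2)
  have hδ1 : δ ≤ (ε₁/2) * Real.exp (-(l*(M+1))) := min_le_left _ _
  have hδ2 : δ ≤ 1/2 := (min_le_right _ _).trans (min_le_left _ _)
  have hδ3 : δ ≤ Real.exp l * (Real.exp (l/2) - 1) := (min_le_right _ _).trans (min_le_right _ _)
  obtain ⟨Y₁, hY₁⟩ := Metric.tendsto_atTop.mp (Hlim N) δ hδpos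
  set Y₀ : ℝ := max Y₁ 0 with hY₀def
  have hY₀0 : (0:ℝ) ≤ Y₀ := le_max_right _ _
  have key : ∀ y : ℝ, Y₀ ≤ y → ∀ x : ℝ, |x| ≤ (N:ℝ) →
      |H ((x + y : ℝ) : EReal) / H ((y : ℝ) : EReal) - Real.exp (l * x)| < δ := by
    intro y hy x hx
    have h1 := hY₁ y ((le_max_left _ _).trans hy)
    rw [Real.dist_eq, sub_zero] at h1
    have hcontφ : ContinuousOn
        (fun x : ℝ => |H ((x + y : ℝ) : EReal) / H ((y : ℝ) : EReal) - Real.exp (l * x)|)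
        (Icc (-(N:ℝ)) (N:ℝ)) := by
      apply Continuous.continuousOn
      exact (((Hc.comp (continuous_id.add continuous_const)).div_const _).sub
        (Real.continuous_exp.comp (continuous_const.mul continuous_id))).abs
    have h2 := aux_le_biSup isCompact_Icc hcontφ (Set.mem_Icc.mpr (abs_le.mp hx))
    exact lt_of_le_of_lt (h2.trans (le_abs_self _)) h1
  have HposY : ∀ y : ℝ, Y₀ ≤ y → 0 < H ((y : ℝ) : EReal) := by
    intro y hy
    have h := key y hy 0 (by rw [abs_zero]; linarith)
    rcases (Hnn' y).lt_or_eq with hlt | heq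
    · exact hlt
    · exfalso
      rw [← heq] at h
      norm_num at h
      linarith
  have hupper : ∀ y : ℝ, Y₀ ≤ y → ∀ x : ℝ, |x| ≤ (N:ℝ) →
      H ((x + y : ℝ) : EReal) ≤ H ((y : ℝ) : EReal) * (Real.exp (l * x) + δ) := by
    intro y hy x hx
    have h := (abs_lt.mp (key y hy x hx)).2
    have hypos := HposY y hy
    have h2 : H ((x + y : ℝ) : EReal) / H ((y : ℝ) : EReal) < Real.exp (l * x) + δ := by
      linarith
    rw [div_lt_iff₀ hypos] at h2
    have hcm : (Real.exp (l * x) + δ) * H ((y : ℝ) : EReal) =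
        H ((y : ℝ) : EReal) * (Real.exp (l * x) + δ) := mul_comm _ _
    linarith
  have hlower : ∀ y : ℝ, Y₀ ≤ y → ∀ x : ℝ, |x| ≤ (N:ℝ) →
      H ((y : ℝ) : EReal) * (Real.exp (l * x) - δ) ≤ H ((x + y : ℝ) : EReal) := by
    intro y hy x hx
    have h := (abs_lt.mp (key y hy x hx)).1
    have hypos := HposY y hy
    have h2 : Real.exp (l * x) - δ < H ((x + y : ℝ) : EReal) / H ((y : ℝ) : EReal) := by
      linarith
    rw [lt_div_iff₀ hypos] at h2
    have hcm : (Real.exp (l * x) - δ) * H ((y : ℝ) : EReal) =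
        H ((y : ℝ) : EReal) * (Real.exp (l * x) - δ) := mul_comm _ _
    linarith
  have hstep : ∀ y : ℝ, Y₀ ≤ y →
      H ((y + 1 : ℝ) : EReal) ≤ Real.exp (3*l/2) * H ((y : ℝ) : EReal) := by
    intro y hy
    have h1 := hupper y hy 1 (by rw [abs_one]; exact hN1)
    rw [mul_one] at h1
    have h2 : Real.exp l + δ ≤ Real.exp (3*l/2) := by
      have hem : Real.exp l * Real.exp (l/2) = Real.exp (3*l/2) := by
        rw [← Real.exp_add]; ring_nf
      linarith [hem, hδ3]
    have h3 : ((y + 1 : ℝ) : EReal) = ((1 + y : ℝ) : EReal) := by congr 1; ring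
    rw [h3]
    calc H ((1 + y : ℝ) : EReal) ≤ H ((y : ℝ) : EReal) * (Real.exp l + δ) := h1
      _ ≤ H ((y : ℝ) : EReal) * Real.exp (3*l/2) := mul_le_mul_of_nonneg_left h2 (Hnn' y)
      _ = Real.exp (3*l/2) * H ((y : ℝ) : EReal) := mul_comm _ _
  have hK1 : (1:ℝ) ≤ Real.exp (3*l/2) := by
    have := Real.add_one_le_exp (3*l/2); linarith
  obtain ⟨C, hC0, hgrow⟩ := aux_growth (F := fun y : ℝ => H ((y : ℝ) : EReal)) Hc Y₀ _ hK1 hstep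
  have hgrow' : ∀ y : ℝ, Y₀ ≤ y →
      H ((y : ℝ) : EReal) ≤ C * Real.exp ((y - Y₀) * (3*l/2)) := by
    intro y hy
    refine (hgrow y hy).trans ?_
    have h1 : (Real.exp (3*l/2)) ^ (⌊y - Y₀⌋₊) = Real.exp ((⌊y - Y₀⌋₊ : ℝ) * (3*l/2)) :=
      (Real.exp_nat_mul _ _).symm
    rw [h1]
    apply mul_le_mul_of_nonneg_left _ hC0
    apply Real.exp_le_exp.mpr
    have hfl := Nat.floor_le (sub_nonneg.2 hy)
    have h32 : (0:ℝ) ≤ 3*l/2 := by linarith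
    exact mul_le_mul_of_nonneg_right hfl h32
  set C₁ : ℝ := C * Real.exp (-(Y₀ * (3*l/2))) with hC₁def
  have hC₁0 : 0 ≤ C₁ := mul_nonneg hC0 (Real.exp_pos _).le
  set C₂ : ℝ := H ((-(2*M+1) : ℝ) : EReal) with hC₂def
  -- eventually conditions
  have ev1 : ∀ᶠ w : ℕ in atTop, 1 ≤ w := eventually_ge_atTop 1
  have tendAw : Tendsto (fun w : ℕ => Real.log w / l) atTop atTop :=
    Tendsto.atTop_div_const hl (Real.tendsto_log_atTop.comp tendsto_natCast_atTop_atTop)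
  have ev2 : ∀ᶠ w : ℕ in atTop, Y₀ ≤ Real.log w / l := tendAw.eventually_ge_atTop Y₀
  set η : ℝ := min (1/2) (ε₁/4) / (2*l) with hηdef
  have hηpos : 0 < η := div_pos (lt_min (by norm_num) (by linarith)) (by linarith)
  have t3 : Tendsto (fun w : ℕ => (w:ℝ) ^ (-(1:ℝ)/3)) atTop (𝓝 0) := by
    have h := (tendsto_rpow_neg_atTop (show (0:ℝ) < 1/3 by norm_num)).comp
      tendsto_natCast_atTop_atTop
    simpa [Function.comp_def, neg_div] using h
  have ev3 : ∀ᶠ w : ℕ in atTop, (w:ℝ) ^ (-(1:ℝ)/3) < η := t3.eventually_lt_const hηpos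
  have t4 : Tendsto (fun w : ℕ => (w:ℝ) ^ (-(2:ℝ)) * C₂) atTop (𝓝 0) := by
    have h := ((tendsto_rpow_neg_atTop (show (0:ℝ) < 2 by norm_num)).comp
      tendsto_natCast_atTop_atTop).mul_const C₂
    simpa [Function.comp] using h
  have ev4 : ∀ᶠ w : ℕ in atTop, (w:ℝ) ^ (-(2:ℝ)) * C₂ < ε₁/4 :=
    t4.eventually_lt_const (by linarith)
  have t5 : Tendsto (fun w : ℕ => (w:ℝ) ^ (-(1:ℝ)/2) * (C₁ * (Real.exp (l*(M+1)) + 1)))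
      atTop (𝓝 0) := by
    have h := ((tendsto_rpow_neg_atTop (show (0:ℝ) < 1/2 by norm_num)).comp
      tendsto_natCast_atTop_atTop).mul_const (C₁ * (Real.exp (l*(M+1)) + 1))
    simpa [Function.comp, neg_div] using h
  have ev5 : ∀ᶠ w : ℕ in atTop,
      (w:ℝ) ^ (-(1:ℝ)/2) * (C₁ * (Real.exp (l*(M+1)) + 1)) < ε₁/4 :=
    t5.eventually_lt_const (by linarith)
  obtain ⟨W₁, hW₁⟩ := eventually_atTop.mp ((ev1.and ev2).and ((ev3.and ev4).and ev5))
  refine ⟨W₁, ?_⟩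
  intro ε₂ hε₂ w hw t Aw hAw Vw hVw cw hcw dw hdw aw haw bw hbw g Q hgc hQc hgM hgε hQout hQin
  obtain ⟨⟨hw1, hwA⟩, ⟨hwV, hwC₂⟩, hwC₁⟩ := hW₁ w hw
  obtain ⟨hε₂0, hε₂1⟩ := hε₂
  have hw0 : (0:ℝ) < (w:ℝ) := by exact_mod_cast Nat.lt_of_lt_of_le Nat.zero_lt_one hw1
  have hw1' : (1:ℝ) ≤ (w:ℝ) := by exact_mod_cast hw1
  have hAwY : Y₀ ≤ Aw := by rw [hAw]; exact hwA
  have hAw0 : 0 ≤ Aw := hY₀0.trans hAwY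
  have HApos : 0 < H ((Aw : ℝ) : EReal) := HposY Aw hAwY
  set HA : ℝ := H ((Aw : ℝ) : EReal) with hHAdef
  have hVpos : 0 < Vw := by rw [hVw]; exact Real.rpow_pos_of_pos hw0 _
  have hV1 : Vw ≤ 1 := by
    rw [hVw]; exact Real.rpow_le_one_of_one_le_of_nonpos hw1' (by norm_num)
  have h2lV : 2*l*Vw ≤ min (1/2) (ε₁/4) := by
    have hVη : Vw ≤ η := by rw [hVw]; exact hwV.le
    rw [hηdef] at hVη
    have h := (le_div_iff₀ (by linarith : (0:ℝ) < 2*l)).mp hVη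
    have h' : 2*l*Vw = Vw*(2*l) := by ring
    linarith
  have h2lV1 : 2*l*Vw ≤ 1/2 := h2lV.trans (min_le_left _ _)
  have h2lV2 : 2*l*Vw ≤ ε₁/4 := h2lV.trans (min_le_right _ _)
  have h2lV0 : 0 ≤ 2*l*Vw := by positivity
  have hw2pos : (0:ℝ) < (w:ℝ) ^ (-(2:ℝ)) := Real.rpow_pos_of_pos hw0 _
  have hβHA : 0 < β / HA := div_pos hβ HApos
  have hawcw : aw ≤ cw := by rw [haw]; linarith
  have hcwt : cw < t := by rw [hcw]; linarith
  have htdw : t < dw := by rw [hdw]; linarith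
  have hcwdw : cw ≤ dw := by linarith
  have hdwbw : dw ≤ bw := by rw [hbw]; linarith
  have hawbw : aw ≤ bw := by linarith
  have ht : t ∈ Set.Icc aw bw := ⟨by linarith, by linarith⟩
  obtain ⟨hgtM1, hgtM2⟩ := abs_le.mp (hgM t ht)
  set f : ℝ → ℝ := fun u => H ((g u - Q u : ℝ) : EReal) with hfdef
  have hfc : ContinuousOn f (Set.Icc aw bw) := Hc.comp_continuousOn (hgc.sub hQc)
  have hInt : IntegrableOn f (Set.Icc aw bw) := hfc.integrableOn_compact isCompact_Icc
  have hfnn : ∀ u : ℝ, 0 ≤ f u := fun u => Hnn' _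
  -- pointwise bounds on the middle interval
  have hmidpt : ∀ u ∈ Set.Icc cw dw,
      HA * (Real.exp (l*(g t - ε₂)) * Real.exp (-(2*l*Vw)) - δ) ≤ f u ∧
      f u ≤ HA * (Real.exp (l*(g t + ε₂)) * Real.exp (2*l*Vw) + δ) := by
    intro u hu
    have hu' : u ∈ Set.Icc aw bw := ⟨hawcw.trans hu.1, hu.2.trans hdwbw⟩
    obtain ⟨hg1, hg2⟩ := abs_le.mp (hgε u hu')
    obtain ⟨hQ1, hQ2⟩ := hQin u hu
    set x : ℝ := g u - Q u - Aw with hxdef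
    have hxub : x ≤ g t + ε₂ + 2*Vw := by rw [hxdef]; linarith
    have hxlb : g t - ε₂ - 2*Vw ≤ x := by rw [hxdef]; linarith
    have hxabs : |x| ≤ (N:ℝ) := by
      rw [abs_le]
      constructor
      · linarith
      · linarith
    have hfu : f u = H ((x + Aw : ℝ) : EReal) := by
      have hre : (g u - Q u : ℝ) = x + Aw := by rw [hxdef]; ring
      show H ((g u - Q u : ℝ) : EReal) = H ((x + Aw : ℝ) : EReal)
      rw [hre]
    rw [hfu]
    constructor
    · refine le_trans ?_ (hlower Aw hAwY x hxabs)
      apply mul_le_mul_of_nonneg_left _ HApos.le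
      have hEE : Real.exp (l*(g t - ε₂)) * Real.exp (-(2*l*Vw)) ≤ Real.exp (l*x) := by
        rw [← Real.exp_add]
        apply Real.exp_le_exp.mpr
        linarith [mul_le_mul_of_nonneg_left hxlb hl.le]
      linarith
    · refine (hupper Aw hAwY x hxabs).trans ?_
      apply mul_le_mul_of_nonneg_left _ HApos.le
      have hEE : Real.exp (l*x) ≤ Real.exp (l*(g t + ε₂)) * Real.exp (2*l*Vw) := by
        rw [← Real.exp_add]
        apply Real.exp_le_exp.mpr
        linarith [mul_le_mul_of_nonneg_left hxub hl.le]
      linarith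
  -- middle integral bounds
  have hIntM : IntegrableOn f (Set.Icc cw dw) :=
    hInt.mono_set (Set.Icc_subset_Icc hawcw hdwbw)
  have hvolM : (volume (Set.Icc cw dw)).toReal = 2*(β/HA) := by
    rw [Real.volume_Icc, ENNReal.toReal_ofReal (by linarith)]
    rw [hdw, hcw]; ring
  have hconstInt : ∀ c : ℝ, ∀ p q : ℝ, IntegrableOn (fun _ : ℝ => c) (Set.Icc p q) volume :=
    fun c p q => integrableOn_const (by rw [Real.volume_Icc]; exact ENNReal.ofReal_ne_top)
  have hHAne : HA ≠ 0 := ne_of_gt HApos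
  have hmidub : ∫ u in Set.Icc cw dw, f u ≤
      2*β * (Real.exp (l*(g t + ε₂)) * Real.exp (2*l*Vw) + δ) := by
    have h := setIntegral_mono_on hIntM (hconstInt _ cw dw) measurableSet_Icc
      (fun u hu => (hmidpt u hu).2)
    rw [setIntegral_const, measureReal_def, hvolM, smul_eq_mul] at h
    refine h.trans (le_of_eq ?_)
    field_simp
  have hmidlb : 2*β * (Real.exp (l*(g t - ε₂)) * Real.exp (-(2*l*Vw)) - δ) ≤
      ∫ u in Set.Icc cw dw, f u := by
    have h := setIntegral_mono_on (hconstInt _ cw dw) hIntM measurableSet_Icc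
      (fun u hu => (hmidpt u hu).1)
    rw [setIntegral_const, measureReal_def, hvolM, smul_eq_mul] at h
    refine le_trans (le_of_eq ?_) h
    field_simp
  -- bound on HA
  have hHAle : HA ≤ C₁ * (w:ℝ) ^ ((3:ℝ)/2) := by
    have h := hgrow' Aw hAwY
    have h2 : Real.exp ((Aw - Y₀)*(3*l/2)) =
        Real.exp (-(Y₀ * (3*l/2))) * Real.exp (Aw*(3*l/2)) := by
      rw [← Real.exp_add]; ring_nf
    have h3 : Real.exp (Aw*(3*l/2)) = (w:ℝ) ^ ((3:ℝ)/2) := by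
      rw [hAw, Real.rpow_def_of_pos hw0]
      congr 1
      field_simp
    calc HA ≤ C * Real.exp ((Aw - Y₀)*(3*l/2)) := h
      _ = C₁ * (w:ℝ) ^ ((3:ℝ)/2) := by rw [h2, h3, hC₁def]; ring
  have hstubpt : ∀ u ∈ Set.Icc aw bw, (u ≤ cw ∨ dw ≤ u) →
      f u ≤ C₂ + HA * (Real.exp (l*(M+1)) + δ) := by
    intro u hu hside
    obtain ⟨hQ1, hQ2⟩ := hQout u hu hside
    obtain ⟨hgu1, hgu2⟩ := abs_le.mp (hgM u hu)
    have hseg : g u - Q u ∈ segment ℝ (-(2*M+1)) (Aw + (M+1)) := by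
      rw [segment_eq_Icc (by linarith : -(2*M+1) ≤ Aw + (M+1))]
      exact ⟨by linarith, by linarith⟩
    have h := Hconv.le_on_segment (Set.mem_univ (-(2*M+1))) (Set.mem_univ (Aw + (M+1))) hseg
    have hub : H ((Aw + (M+1) : ℝ) : EReal) ≤ HA * (Real.exp (l*(M+1)) + δ) := by
      have h2 := hupper Aw hAwY (M+1) (by rw [abs_of_nonneg (by linarith)]; linarith)
      have h3 : ((M+1) + Aw : ℝ) = (Aw + (M+1) : ℝ) := by ring
      rw [h3] at h2
      exact h2
    calc f u ≤ max (H ((-(2*M+1) : ℝ) : EReal)) (H ((Aw + (M+1) : ℝ) : EReal)) := h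
      _ ≤ max C₂ (HA * (Real.exp (l*(M+1)) + δ)) := max_le_max (le_of_eq hC₂def.symm) hub
      _ ≤ C₂ + HA * (Real.exp (l*(M+1)) + δ) := by
          apply max_le
          · exact le_add_of_nonneg_right (mul_nonneg HApos.le
              (add_pos (Real.exp_pos _) hδpos).le)
          · exact le_add_of_nonneg_left (Hnn' _)
  have hstubint : ∀ p q : ℝ, Set.Icc p q ⊆ Set.Icc aw bw →
      (∀ u ∈ Set.Icc p q, u ≤ cw ∨ dw ≤ u) → q - p = (w:ℝ) ^ (-(2:ℝ)) →
      ∫ u in Set.Icc p q, f u ≤ ε₁/2 := by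
    intro p q hsub hside hlen
    have h := setIntegral_mono_on (hInt.mono_set hsub) (hconstInt _ p q) measurableSet_Icc
      (fun u hu => hstubpt u (hsub hu) (hside u hu))
    rw [setIntegral_const, measureReal_def, Real.volume_Icc, ENNReal.toReal_ofReal (by rw [hlen]; positivity),
      hlen, smul_eq_mul] at h
    refine h.trans ?_
    have h2 : (w:ℝ) ^ (-(2:ℝ)) * (HA * (Real.exp (l*(M+1)) + δ)) ≤ ε₁/4 := by
      have hb : HA * (Real.exp (l*(M+1)) + δ) ≤
          (C₁ * (w:ℝ) ^ ((3:ℝ)/2)) * (Real.exp (l*(M+1)) + 1) := by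
        apply mul_le_mul hHAle (by linarith) (add_pos (Real.exp_pos _) hδpos).le
        exact mul_nonneg hC₁0 (Real.rpow_nonneg hw0.le _)
      have hc : (w:ℝ) ^ (-(2:ℝ)) * ((C₁ * (w:ℝ) ^ ((3:ℝ)/2)) * (Real.exp (l*(M+1)) + 1)) =
          (w:ℝ) ^ (-(1:ℝ)/2) * (C₁ * (Real.exp (l*(M+1)) + 1)) := by
        rw [show (-(1:ℝ)/2) = (-(2:ℝ)) + (3:ℝ)/2 by norm_num, Real.rpow_add hw0]
        ring
      calc (w:ℝ) ^ (-(2:ℝ)) * (HA * (Real.exp (l*(M+1)) + δ))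
          ≤ (w:ℝ) ^ (-(2:ℝ)) * ((C₁ * (w:ℝ) ^ ((3:ℝ)/2)) * (Real.exp (l*(M+1)) + 1)) :=
            mul_le_mul_of_nonneg_left hb hw2pos.le
        _ = (w:ℝ) ^ (-(1:ℝ)/2) * (C₁ * (Real.exp (l*(M+1)) + 1)) := hc
        _ ≤ ε₁/4 := hwC₁.le
    calc (w:ℝ) ^ (-(2:ℝ)) * (C₂ + HA * (Real.exp (l*(M+1)) + δ))
        = (w:ℝ) ^ (-(2:ℝ)) * C₂ + (w:ℝ) ^ (-(2:ℝ)) * (HA * (Real.exp (l*(M+1)) + δ)) := by ring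
      _ ≤ ε₁/4 + ε₁/4 := add_le_add hwC₂.le h2
      _ = ε₁/2 := by ring
  have hstub1ub : ∫ u in Set.Icc aw cw, f u ≤ ε₁/2 := by
    apply hstubint aw cw (Set.Icc_subset_Icc le_rfl (by linarith))
      (fun u hu => Or.inl hu.2)
    rw [haw]; ring
  have hstub2ub : ∫ u in Set.Icc dw bw, f u ≤ ε₁/2 := by
    apply hstubint dw bw (Set.Icc_subset_Icc (by linarith) le_rfl)
      (fun u hu => Or.inr hu.1)
    rw [hbw]; ring
  have hstub1lb : 0 ≤ ∫ u in Set.Icc aw cw, f u :=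
    setIntegral_nonneg measurableSet_Icc (fun u _ => hfnn u)
  have hstub2lb : 0 ≤ ∫ u in Set.Icc dw bw, f u :=
    setIntegral_nonneg measurableSet_Icc (fun u _ => hfnn u)
  have hmid0 : 0 ≤ ∫ u in Set.Icc cw dw, f u :=
    setIntegral_nonneg measurableSet_Icc (fun u _ => hfnn u)
  -- splitting
  have hint1 : IntegrableOn f (Set.Ioc aw cw) :=
    hInt.mono_set (Set.Ioc_subset_Icc_self.trans (Set.Icc_subset_Icc le_rfl (by linarith)))
  have hint2 : IntegrableOn f (Set.Ioc cw dw) :=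
    hInt.mono_set (Set.Ioc_subset_Icc_self.trans (Set.Icc_subset_Icc hawcw hdwbw))
  have hint3 : IntegrableOn f (Set.Ioc dw bw) :=
    hInt.mono_set (Set.Ioc_subset_Icc_self.trans (Set.Icc_subset_Icc (by linarith) le_rfl))
  have hint23 : IntegrableOn f (Set.Ioc cw bw) :=
    hInt.mono_set (Set.Ioc_subset_Icc_self.trans (Set.Icc_subset_Icc hawcw le_rfl))
  have hsplit : ∫ u in Set.Icc aw bw, f u =
      (∫ u in Set.Icc aw cw, f u) + (∫ u in Set.Icc cw dw, f u) +
        (∫ u in Set.Icc dw bw, f u) := by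
    rw [integral_Icc_eq_integral_Ioc, integral_Icc_eq_integral_Ioc,
      integral_Icc_eq_integral_Ioc, integral_Icc_eq_integral_Ioc]
    rw [show Set.Ioc aw bw = Set.Ioc aw cw ∪ Set.Ioc cw bw from
      (Set.Ioc_union_Ioc_eq_Ioc hawcw (hcwdw.trans hdwbw)).symm]
    rw [setIntegral_union (Set.Ioc_disjoint_Ioc_of_le le_rfl) measurableSet_Ioc hint1 hint23]
    rw [show Set.Ioc cw bw = Set.Ioc cw dw ∪ Set.Ioc dw bw from
      (Set.Ioc_union_Ioc_eq_Ioc hcwdw hdwbw).symm]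
    rw [setIntegral_union (Set.Ioc_disjoint_Ioc_of_le le_rfl) measurableSet_Ioc hint2 hint3]
    ring
  constructor
  · rw [Real.exp_le_exp]
    have hkey : 2*β * (Real.exp (l*(g t + ε₂)) * Real.exp (2*l*Vw) + δ) ≤
        2*β*(1+ε₁)*Real.exp (l*ε₂)*Real.exp (l*g t) := by
      have hE : Real.exp (l*(g t + ε₂)) = Real.exp (l*ε₂) * Real.exp (l*g t) := by
        rw [← Real.exp_add]; ring_nf
      have hEpos : (0:ℝ) < Real.exp (l*(g t + ε₂)) := Real.exp_pos _
      have hV : Real.exp (2*l*Vw) ≤ 1 + ε₁/2 := by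
        have := aux_exp_le_one_add_two_mul h2lV0 h2lV1
        linarith
      have hδE : δ ≤ (ε₁/2) * Real.exp (l*(g t + ε₂)) := by
        refine hδ1.trans ?_
        apply mul_le_mul_of_nonneg_left _ (by linarith : (0:ℝ) ≤ ε₁/2)
        apply Real.exp_le_exp.mpr
        linarith [mul_le_mul_of_nonneg_left
          (show -(M+1) ≤ g t + ε₂ by linarith) hl.le]
      have h1 : Real.exp (l*(g t + ε₂)) * Real.exp (2*l*Vw) + δ ≤
          (1+ε₁) * Real.exp (l*(g t + ε₂)) := by
        linarith [mul_le_mul_of_nonneg_left hV hEpos.le]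
      calc 2*β * (Real.exp (l*(g t + ε₂)) * Real.exp (2*l*Vw) + δ)
          ≤ 2*β*((1+ε₁) * Real.exp (l*(g t + ε₂))) :=
            mul_le_mul_of_nonneg_left h1 (by linarith)
        _ = 2*β*(1+ε₁)*Real.exp (l*ε₂)*Real.exp (l*g t) := by rw [hE]; ring
    have hIub : (∫ u in Set.Icc aw bw, f u) ≤
        ε₁ + 2*β*(1+ε₁)*Real.exp (l*ε₂)*Real.exp (l*g t) := by
      rw [hsplit]
      linarith [hstub1ub, hstub2ub, hmidub]
    have hbe : (0:ℝ) ≤ 2*β*ε₁ := by positivity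
    linarith [hIub, hbe]
  · rw [Real.exp_le_exp]
    have hkey : 2*β*(1-ε₁)*Real.exp (-(l*ε₂))*Real.exp (l*g t) ≤
        2*β * (Real.exp (l*(g t - ε₂)) * Real.exp (-(2*l*Vw)) - δ) := by
      have hE : Real.exp (l*(g t - ε₂)) = Real.exp (-(l*ε₂)) * Real.exp (l*g t) := by
        rw [← Real.exp_add]; ring_nf
      have hEpos : (0:ℝ) < Real.exp (l*(g t - ε₂)) := Real.exp_pos _
      have hV : 1 - ε₁/2 ≤ Real.exp (-(2*l*Vw)) := by
        have := Real.add_one_le_exp (-(2*l*Vw)); linarith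
      have hδE : δ ≤ (ε₁/2) * Real.exp (l*(g t - ε₂)) := by
        refine hδ1.trans ?_
        apply mul_le_mul_of_nonneg_left _ (by linarith : (0:ℝ) ≤ ε₁/2)
        apply Real.exp_le_exp.mpr
        linarith [mul_le_mul_of_nonneg_left
          (show -(M+1) ≤ g t - ε₂ by linarith) hl.le]
      have h1 : (1-ε₁) * Real.exp (l*(g t - ε₂)) ≤
          Real.exp (l*(g t - ε₂)) * Real.exp (-(2*l*Vw)) - δ := by
        linarith [mul_le_mul_of_nonneg_left hV hEpos.le]
      calc 2*β*(1-ε₁)*Real.exp (-(l*ε₂))*Real.exp (l*g t)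
          = 2*β*((1-ε₁) * Real.exp (l*(g t - ε₂))) := by rw [hE]; ring
        _ ≤ 2*β * (Real.exp (l*(g t - ε₂)) * Real.exp (-(2*l*Vw)) - δ) :=
            mul_le_mul_of_nonneg_left h1 (by linarith)
    have hIlb : 2*β*(1-ε₁)*Real.exp (-(l*ε₂))*Real.exp (l*g t) ≤
        ∫ u in Set.Icc aw bw, f u := by
      rw [hsplit]
      linarith [hmidlb]
    have hbe : (0:ℝ) ≤ 2*β*ε₁ := by positivity
    linarith [hIlb, hbe]
end
end
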